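/- arXiv:2209.09229 — 4 statements merged into one kernel-verified Lean document; each statement's English description precedes it below -/
import Mathlib

section
/- For every real number a < 0 and every real number w > 0, i^a · E_{1-a}(w) = ∫_{i}^{i+∞} e^{iwz} z^{a-1} dz, where the integral is along the horizontal ray from i to i+∞. -/
open Complex MeasureTheory Set

namespace BendAux

open Filter Topology intervalIntegral

noncomputable def f (a w : ℝ) (z : ℂ) : ℂ :=
  Complex.exp (Complex.I * w * z) * z ^ ((a:ℂ) - 1)

lemma norm_f (a w : ℝ) {z : ℂ} (hz : z ≠ 0) :
    ‖f a w z‖ = Real.exp (-(w * z.im)) * ‖z‖ ^ (a - 1) := by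
  have h1 : (Complex.I * w * z).re = -(w * z.im) := by
    simp [Complex.mul_re, Complex.mul_im]
  rw [f, norm_mul, Complex.norm_exp, h1,
    Complex.norm_cpow_of_ne_zero hz]
  simp

lemma norm_f_le (a w : ℝ) (ha : a < 0) {z : ℂ} (hz : 1 ≤ ‖z‖) :
    ‖f a w z‖ ≤ Real.exp (-(w * z.im)) := by
  have hz0 : z ≠ 0 := by
    intro h; rw [h] at hz; simp at hz; linarith
  rw [norm_f a w hz0]
  nth_rewrite 2 [← mul_one (Real.exp _)]
  gcongr
  exact Real.rpow_le_one_of_one_le_of_nonpos hz (by linarith)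

lemma cont_horiz (a w : ℝ) : Continuous fun u : ℝ => f a w ((u:ℂ) + Complex.I) := by
  unfold f
  apply Continuous.mul (by fun_prop)
  rw [continuous_iff_continuousAt]
  intro u
  refine ContinuousAt.cpow (by fun_prop) continuousAt_const ?_
  rw [Complex.mem_slitPlane_iff]; right; simp

lemma cont_vert (a w : ℝ) (c : ℝ) :
    ContinuousOn (fun y : ℝ => f a w ((c:ℂ) + y * Complex.I)) (Ioi 0) := by
  unfold f
  apply ContinuousOn.mul (by fun_prop)
  intro y hy
  refine (ContinuousAt.cpow (by fun_prop) continuousAt_const ?_).continuousWithinAt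
  rw [Complex.mem_slitPlane_iff]; right; simp; exact ne_of_gt hy

lemma abs_vert_ge (c y : ℝ) (hy : 1 ≤ y) : 1 ≤ ‖(c:ℂ) + y * Complex.I‖ := by
  calc (1:ℝ) ≤ y := hy
  _ = |((c:ℂ) + y * Complex.I).im| := by
      simp [_root_.abs_of_nonneg (show (0:ℝ) ≤ y by linarith)]
  _ ≤ _ := Complex.abs_im_le_norm _

lemma int_vert (a w : ℝ) (ha : a < 0) (hw : 0 < w) (c : ℝ) :
    IntegrableOn (fun y : ℝ => f a w ((c:ℂ) + y * Complex.I)) (Ioi 1) := by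
  apply Integrable.mono' (g := fun y : ℝ => Real.exp (-w * y))
    (exp_neg_integrableOn_Ioi 1 hw)
  · exact (((cont_vert a w c).mono (Ioi_subset_Ioi zero_le_one)).aestronglyMeasurable
      measurableSet_Ioi)
  · filter_upwards [ae_restrict_mem measurableSet_Ioi] with y hy
    have h := norm_f_le a w ha (abs_vert_ge c y (le_of_lt hy))
    simpa [neg_mul] using h

lemma int_horiz (a w : ℝ) (ha : a < 0) (hw : 0 < w) :
    IntegrableOn (fun u : ℝ => f a w ((u:ℂ) + Complex.I)) (Ioi 0) := by
  rw [← Ioc_union_Ioi_eq_Ioi (zero_le_one (α := ℝ))]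
  apply IntegrableOn.union
  · apply Integrable.mono' (g := fun _ : ℝ => (1:ℝ))
      (integrableOn_const measure_Ioc_lt_top.ne)
    · exact (cont_horiz a w).aestronglyMeasurable.restrict
    · filter_upwards with u
      have habs : 1 ≤ ‖(u:ℂ) + Complex.I‖ := by
        calc (1:ℝ) = |((u:ℂ) + Complex.I).im| := by simp
        _ ≤ _ := Complex.abs_im_le_norm _
      calc ‖f a w ((u:ℂ) + Complex.I)‖ ≤ Real.exp (-(w * ((u:ℂ) + Complex.I).im)) :=
            norm_f_le a w ha habs
      _ ≤ 1 := by
          apply Real.exp_le_one_iff.mpr; simp; positivity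
  · apply Integrable.mono' (g := fun u : ℝ => u ^ (a - 1))
      (integrableOn_Ioi_rpow_of_lt (by linarith) one_pos)
    · exact (cont_horiz a w).aestronglyMeasurable.restrict
    · filter_upwards [ae_restrict_mem measurableSet_Ioi] with u hu
      have hu1 : (1:ℝ) < u := hu
      have hz0 : ((u:ℂ) + Complex.I) ≠ 0 := by
        intro h
        have : ((u:ℂ) + Complex.I).im = 0 := by rw [h]; simp
        simp at this
      rw [norm_f a w hz0]
      have h1 : ‖(u:ℂ) + Complex.I‖ ^ (a-1) ≤ u ^ (a-1) := by
        apply Real.rpow_le_rpow_of_nonpos (by linarith) ?_ (by linarith)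
        calc u = |((u:ℂ) + Complex.I).re| := by
              simp [_root_.abs_of_nonneg (show (0:ℝ) ≤ u by linarith)]
        _ ≤ _ := Complex.abs_re_le_norm _
      calc Real.exp (-(w * ((u:ℂ) + Complex.I).im)) * ‖(u:ℂ) + Complex.I‖ ^ (a-1)
          ≤ 1 * (u ^ (a-1)) := by
            apply mul_le_mul ?_ h1 (by positivity) zero_le_one
            apply Real.exp_le_one_iff.mpr; simp; positivity
      _ = u ^ (a-1) := one_mul _

lemma rect (a w : ℝ) (R T : ℝ) (hT : 1 ≤ T) :
    (∫ x in (0:ℝ)..R, f a w (x + Complex.I)) - (∫ x in (0:ℝ)..R, f a w (x + T * Complex.I))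
      + Complex.I • (∫ y in (1:ℝ)..T, f a w (R + y * Complex.I))
      - Complex.I • (∫ y in (1:ℝ)..T, f a w (y * Complex.I)) = 0 := by
  have H : DifferentiableOn ℂ (f a w)
      (Set.uIcc (Complex.I).re ((R:ℂ) + T * Complex.I).re ×ℂ
        Set.uIcc (Complex.I).im ((R:ℂ) + T * Complex.I).im) := by
    intro z hz
    rw [Complex.mem_reProdIm] at hz
    have him : 1 ≤ z.im := by
      have h2 := hz.2
      simp at h2
      rw [uIcc_of_le hT] at h2
      exact h2.1
    apply DifferentiableAt.differentiableWithinAt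
    apply DifferentiableAt.mul (by fun_prop)
    exact differentiableAt_id.cpow (differentiableAt_const _)
      (by rw [Complex.mem_slitPlane_iff]; right; simp only [id_eq]; intro h
          rw [h] at him; linarith)
  have := Complex.integral_boundary_rect_eq_zero_of_differentiableOn (f a w) Complex.I
    ((R:ℂ) + T * Complex.I) H
  simpa using this

lemma top_tendsto (a w : ℝ) (ha : a < 0) (hw : 0 < w) (R : ℝ) (hR : 0 ≤ R) :
    Tendsto (fun T : ℝ => ∫ x in (0:ℝ)..R, f a w (x + T * Complex.I)) atTop (𝓝 0) := by
  apply squeeze_zero_norm' (a := fun T : ℝ => Real.exp (-(w * T)) * |R - 0|)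
  · filter_upwards [eventually_ge_atTop (1:ℝ)] with T hT
    apply intervalIntegral.norm_integral_le_of_norm_le_const
    intro x hx
    have h := norm_f_le a w ha (abs_vert_ge x T hT)
    simpa using h
  · have hexp : Tendsto (fun T : ℝ => Real.exp (-(w * T))) atTop (𝓝 0) := by
      apply Real.tendsto_exp_atBot.comp
      have : ∀ T : ℝ, -(w * T) = (-w) * T := fun T => by ring
      simp only [this]
      exact tendsto_id.const_mul_atTop_of_neg (by linarith)
    simpa using hexp.mul_const (|R - 0|)

lemma side_tendsto (a w : ℝ) (ha : a < 0) (hw : 0 < w) (c : ℝ) :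
    Tendsto (fun T : ℝ => ∫ y in (1:ℝ)..T, f a w ((c:ℂ) + y * Complex.I)) atTop
      (𝓝 (∫ y in Ioi (1:ℝ), f a w ((c:ℂ) + y * Complex.I))) :=
  intervalIntegral_tendsto_integral_Ioi 1 (int_vert a w ha hw c) tendsto_id

lemma eqB (a w : ℝ) (ha : a < 0) (hw : 0 < w) (R : ℝ) (hR : 0 ≤ R) :
    (∫ x in (0:ℝ)..R, f a w (x + Complex.I))
      = Complex.I • (∫ y in Ioi (1:ℝ), f a w ((0:ℝ) + y * Complex.I))
        - Complex.I • (∫ y in Ioi (1:ℝ), f a w ((R:ℝ) + y * Complex.I)) := by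
  have h1 : Tendsto (fun T : ℝ =>
      (∫ x in (0:ℝ)..R, f a w (x + T * Complex.I))
        - Complex.I • (∫ y in (1:ℝ)..T, f a w ((R:ℝ) + y * Complex.I))
        + Complex.I • (∫ y in (1:ℝ)..T, f a w ((0:ℝ) + y * Complex.I))) atTop
      (𝓝 (0 - Complex.I • (∫ y in Ioi (1:ℝ), f a w ((R:ℝ) + y * Complex.I))
        + Complex.I • (∫ y in Ioi (1:ℝ), f a w ((0:ℝ) + y * Complex.I)))) :=
    ((top_tendsto a w ha hw R hR).sub
      ((side_tendsto a w ha hw R).const_smul Complex.I)).add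
      ((side_tendsto a w ha hw 0).const_smul Complex.I)
  have h2 : ∀ᶠ T : ℝ in atTop,
      (∫ x in (0:ℝ)..R, f a w (x + T * Complex.I))
        - Complex.I • (∫ y in (1:ℝ)..T, f a w ((R:ℝ) + y * Complex.I))
        + Complex.I • (∫ y in (1:ℝ)..T, f a w ((0:ℝ) + y * Complex.I))
      = (∫ x in (0:ℝ)..R, f a w (x + Complex.I)) := by
    filter_upwards [eventually_ge_atTop (1:ℝ)] with T hT
    have h := rect a w R T hT
    simp only [Complex.ofReal_zero, zero_add]
    linear_combination -h
  have h3 := tendsto_nhds_unique (h1.congr' h2) tendsto_const_nhds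
  simp only [smul_eq_mul] at h3 ⊢
  linear_combination -h3

lemma A_tendsto (a w : ℝ) (ha : a < 0) (hw : 0 < w) :
    Tendsto (fun R : ℝ => ∫ y in Ioi (1:ℝ), f a w ((R:ℝ) + y * Complex.I)) atTop (𝓝 0) := by
  apply squeeze_zero_norm'
    (a := fun R : ℝ => R ^ (a-1) * ∫ y in Ioi (1:ℝ), Real.exp (-w * y))
  · filter_upwards [eventually_ge_atTop (1:ℝ)] with R hR
    calc ‖∫ y in Ioi (1:ℝ), f a w ((R:ℝ) + y * Complex.I)‖
        ≤ ∫ y in Ioi (1:ℝ), ‖f a w ((R:ℝ) + y * Complex.I)‖ := norm_integral_le_integral_norm _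
      _ ≤ ∫ y in Ioi (1:ℝ), R ^ (a-1) * Real.exp (-w * y) := by
          apply setIntegral_mono_on ((int_vert a w ha hw R).norm)
            ((exp_neg_integrableOn_Ioi 1 hw).const_mul _) measurableSet_Ioi
          intro y hy
          have hy1 : (1:ℝ) ≤ y := le_of_lt hy
          have habs : 1 ≤ ‖(R:ℂ) + y * Complex.I‖ := abs_vert_ge R y hy1
          have hz0 : ((R:ℂ) + y * Complex.I) ≠ 0 := by
            intro h; rw [h] at habs; simp at habs; linarith
          rw [norm_f a w hz0]
          have him : ((R:ℂ) + y * Complex.I).im = y := by simp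
          rw [him]
          rw [mul_comm (R ^ (a-1))]
          apply mul_le_mul_of_nonneg_left ?_ (Real.exp_nonneg _) |>.trans
            (le_of_eq (by rw [neg_mul]))
          apply Real.rpow_le_rpow_of_nonpos (by linarith) ?_ (by linarith)
          calc R = |((R:ℂ) + y * Complex.I).re| := by
                simp [_root_.abs_of_nonneg (show (0:ℝ) ≤ R by linarith)]
          _ ≤ _ := Complex.abs_re_le_norm _
      _ = R ^ (a-1) * ∫ y in Ioi (1:ℝ), Real.exp (-w * y) := MeasureTheory.integral_const_mul _ _
  · have hpow : Tendsto (fun R : ℝ => R ^ (a-1)) atTop (𝓝 0) := by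
      have : ∀ R : ℝ, R ^ (a-1) = R ^ (-(1-a)) := fun R => by norm_num
      simp only [this]
      exact tendsto_rpow_neg_atTop (by linarith)
    simpa using hpow.mul_const (∫ y in Ioi (1:ℝ), Real.exp (-w * y))

lemma key (a w : ℝ) (ha : a < 0) (hw : 0 < w) :
    (∫ u in Ioi (0:ℝ), f a w ((u:ℂ) + Complex.I))
      = Complex.I • (∫ y in Ioi (1:ℝ), f a w ((0:ℝ) + y * Complex.I)) := by
  have hL : Tendsto (fun R : ℝ => ∫ x in (0:ℝ)..R, f a w (x + Complex.I)) atTop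
      (𝓝 (∫ u in Ioi (0:ℝ), f a w ((u:ℂ) + Complex.I))) :=
    intervalIntegral_tendsto_integral_Ioi 0 (int_horiz a w ha hw) tendsto_id
  have hR : Tendsto (fun R : ℝ =>
      Complex.I • (∫ y in Ioi (1:ℝ), f a w ((0:ℝ) + y * Complex.I))
        - Complex.I • (∫ y in Ioi (1:ℝ), f a w ((R:ℝ) + y * Complex.I))) atTop
      (𝓝 (Complex.I • (∫ y in Ioi (1:ℝ), f a w ((0:ℝ) + y * Complex.I)) - Complex.I • 0)) :=
    tendsto_const_nhds.sub ((A_tendsto a w ha hw).const_smul Complex.I)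
  have heq : ∀ᶠ R : ℝ in atTop,
      (∫ x in (0:ℝ)..R, f a w (x + Complex.I))
      = Complex.I • (∫ y in Ioi (1:ℝ), f a w ((0:ℝ) + y * Complex.I))
        - Complex.I • (∫ y in Ioi (1:ℝ), f a w ((R:ℝ) + y * Complex.I)) := by
    filter_upwards [eventually_ge_atTop (0:ℝ)] with R hR0
    exact eqB a w ha hw R hR0
  have := tendsto_nhds_unique (hL.congr' heq) hR
  rw [this, smul_zero, sub_zero]

lemma ofReal_mul_I_cpow (y : ℝ) (hy : 0 < y) (c : ℂ) :
    ((y:ℂ) * Complex.I) ^ c = (y:ℂ) ^ c * Complex.I ^ c := by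
  have hy0 : (y:ℂ) ≠ 0 := by exact_mod_cast hy.ne'
  rw [Complex.cpow_def_of_ne_zero (mul_ne_zero hy0 Complex.I_ne_zero),
    Complex.cpow_def_of_ne_zero hy0, Complex.cpow_def_of_ne_zero Complex.I_ne_zero,
    Complex.log_ofReal_mul hy Complex.I_ne_zero, ← Complex.exp_add,
    Complex.ofReal_log hy.le]
  ring_nf

end BendAux

/-- Lemma (bend), boundary case: for `a < 0` and real `w > 0`,
`i^a · E_{1-a}(w) = ∫_i^{i+∞} e^{iwz} z^{a-1} dz`. -/
theorem bend_lemma_real (a w : ℝ) (ha : a < 0) (hw : 0 < w) :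
    Complex.I ^ (a:ℂ) *
        (∫ t in Ioi (1:ℝ), Complex.exp (-(w:ℂ) * t) * (t:ℂ) ^ (-(1 - (a:ℂ))))
      = ∫ u in Ioi (0:ℝ), Complex.exp (Complex.I * w * (Complex.I + u)) *
          (Complex.I + (u:ℂ)) ^ ((a:ℂ) - 1) := by
  have key := BendAux.key a w ha hw
  have hRHS : (∫ u in Ioi (0:ℝ), Complex.exp (Complex.I * w * (Complex.I + u)) *
      (Complex.I + (u:ℂ)) ^ ((a:ℂ) - 1)) = ∫ u in Ioi (0:ℝ), BendAux.f a w ((u:ℂ) + Complex.I) := by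
    apply setIntegral_congr_fun measurableSet_Ioi
    intro u _
    simp only [BendAux.f, add_comm]
  have hLHS : Complex.I ^ (a:ℂ) *
      (∫ t in Ioi (1:ℝ), Complex.exp (-(w:ℂ) * t) * (t:ℂ) ^ (-(1 - (a:ℂ))))
      = Complex.I • (∫ y in Ioi (1:ℝ), BendAux.f a w ((0:ℝ) + y * Complex.I)) := by
    rw [smul_eq_mul, ← integral_const_mul, ← integral_const_mul]
    apply setIntegral_congr_fun measurableSet_Ioi
    intro y hy
    have hy0 : (0:ℝ) < y := lt_trans zero_lt_one hy
    simp only [BendAux.f, Complex.ofReal_zero, zero_add]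
    have harg : Complex.I * (w:ℂ) * ((y:ℂ) * Complex.I) = -(w:ℂ) * y := by
      rw [show Complex.I * (w:ℂ) * ((y:ℂ) * Complex.I)
        = Complex.I * Complex.I * ((w:ℂ) * y) by ring, Complex.I_mul_I]
      ring
    rw [harg, BendAux.ofReal_mul_I_cpow y hy0, show -(1 - (a:ℂ)) = (a:ℂ) - 1 by ring]
    have hIa : Complex.I ^ (a:ℂ) = Complex.I ^ ((a:ℂ) - 1) * Complex.I := by
      rw [show (a:ℂ) = ((a:ℂ) - 1) + 1 by ring, Complex.cpow_add _ _ Complex.I_ne_zero,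
        Complex.cpow_one]
      ring_nf
    rw [hIa]
    ring
  rw [hLHS, hRHS, key]
end

section
/- For every complex z with Re(z) > 0 and every p ∈ C \ N, the generalized exponential integral satisfies E_p(z) = z^{p-1} Γ(1-p) − ∑_{k≥0} (−z)^k / (k! (1−p+k)), where the series converges absolutely for all z. -/
open Complex MeasureTheory Set Filter Topology

lemma Ep_norm_integrand {p z : ℂ} {t : ℝ} (ht : 0 < t) :
    ‖Complex.exp (-z * t) * (t:ℂ) ^ (-p)‖ = Real.exp (-z.re * t) * t ^ (-p.re) := by
  rw [norm_mul, Complex.norm_exp,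
    Complex.norm_cpow_eq_rpow_re_of_pos ht]
  congr 2
  simp [Complex.mul_re]

lemma Ep_cont {p z : ℂ} {a : ℝ} (ha : 0 ≤ a) :
    ContinuousOn (fun t : ℝ => Complex.exp (-z * t) * (t:ℂ) ^ (-p)) (Ioi a) := by
  intro t ht
  have ht0 : 0 < t := lt_of_le_of_lt ha ht
  exact ((Complex.continuous_exp.comp (by fun_prop)).continuousAt.continuousWithinAt).mul
    ((Complex.continuousAt_ofReal_cpow_const _ _ (Or.inr ht0.ne')).continuousWithinAt)

lemma Ep_real_integrable {b s : ℝ} (hb : 0 < b) (hs : -1 < s) :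
    IntegrableOn (fun t : ℝ => Real.exp (-b * t) * t ^ s) (Ioi 0) := by
  have := integrableOn_rpow_mul_exp_neg_mul_rpow hs zero_lt_one hb
  simpa [mul_comm, Real.rpow_one] using this

lemma Ep_integrableOn_Ioi_zero {p z : ℂ} (hz : 0 < z.re) (hp : p.re < 1) :
    IntegrableOn (fun t : ℝ => Complex.exp (-z * t) * (t:ℂ) ^ (-p)) (Ioi 0) := by
  have hre : IntegrableOn (fun t : ℝ => Real.exp (-z.re * t) * t ^ (-p.re)) (Ioi 0) :=
    Ep_real_integrable hz (by linarith)
  refine hre.mono' ((Ep_cont le_rfl).aestronglyMeasurable measurableSet_Ioi) ?_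
  filter_upwards [ae_restrict_mem measurableSet_Ioi] with t ht
  rw [Ep_norm_integrand ht]

lemma Ep_integrableOn_Ioi_one (p z : ℂ) (hz : 0 < z.re) :
    IntegrableOn (fun t : ℝ => Complex.exp (-z * t) * (t:ℂ) ^ (-p)) (Ioi 1) := by
  have hre : IntegrableOn (fun t : ℝ => Real.exp (-z.re * t) * t ^ (max (-p.re) 0)) (Ioi 0) :=
    Ep_real_integrable hz (lt_of_lt_of_le neg_one_lt_zero (le_max_right _ _))
  refine (hre.mono_set (Ioi_subset_Ioi zero_le_one)).mono'
    ((Ep_cont zero_le_one).aestronglyMeasurable measurableSet_Ioi) ?_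
  filter_upwards [ae_restrict_mem measurableSet_Ioi] with t ht
  have ht1 : (1:ℝ) ≤ t := le_of_lt ht
  rw [Ep_norm_integrand (lt_of_lt_of_le zero_lt_one ht1)]
  have : t ^ (-p.re) ≤ t ^ (max (-p.re) 0) :=
    Real.rpow_le_rpow_of_exponent_le ht1 (le_max_left _ _)
  exact mul_le_mul_of_nonneg_left this (Real.exp_pos _).le

lemma Ep_summable_norm (p z : ℂ) :
    Summable (fun k : ℕ => ‖(-z) ^ k / ((k.factorial : ℂ) * (1 - p + k))‖) := by
  have h1 : Tendsto (fun k : ℕ => ‖(1:ℂ) - p + k‖) atTop atTop := by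
    apply tendsto_atTop_mono (fun k : ℕ => ?_)
      (tendsto_atTop_add_const_right _ (-‖(1:ℂ) - p‖) tendsto_natCast_atTop_atTop)
    have := norm_sub_norm_le ((k:ℂ)) (-(1 - p))
    simp only [sub_neg_eq_add, Complex.norm_natCast, norm_neg] at this
    calc (k:ℝ) + -‖(1:ℂ) - p‖ = (k:ℝ) - ‖(1:ℂ) - p‖ := by ring
    _ ≤ ‖(k:ℂ) + (1 - p)‖ := this
    _ = ‖(1:ℂ) - p + k‖ := by rw [add_comm]
  have h2 : Tendsto (fun k : ℕ => ‖(1:ℂ) - p + k‖⁻¹) atTop (𝓝 0) := h1.inv_tendsto_atTop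
  obtain ⟨C, hC⟩ : BddAbove (Set.range fun k : ℕ => ‖(1:ℂ) - p + k‖⁻¹) := h2.bddAbove_range
  have hCle : ∀ k : ℕ, ‖(1:ℂ) - p + k‖⁻¹ ≤ C := fun k => hC (Set.mem_range_self k)
  apply Summable.of_nonneg_of_le (fun k => norm_nonneg _) (fun k => ?_)
    ((Real.summable_pow_div_factorial ‖z‖).mul_right C)
  rw [norm_div, norm_pow, norm_neg, norm_mul, Complex.norm_natCast, div_mul_eq_div_div,
    div_eq_mul_inv _ ‖(1:ℂ) - p + (k:ℂ)‖]
  exact mul_le_mul_of_nonneg_left (hCle k) (by positivity)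

lemma Ep_exp_summable (z : ℂ) : Summable (fun k : ℕ => (-z) ^ k / (k.factorial : ℂ)) := by
  apply Summable.of_norm
  have : (fun k : ℕ => ‖(-z) ^ k / (k.factorial : ℂ)‖) = fun k : ℕ => ‖z‖ ^ k / k.factorial := by
    funext k
    rw [norm_div, norm_pow, norm_neg, Complex.norm_natCast]
  rw [this]
  exact Real.summable_pow_div_factorial ‖z‖

lemma Ep_exp_tsum (z : ℂ) : Complex.exp (-z) = ∑' k : ℕ, (-z) ^ k / (k.factorial : ℂ) := by
  rw [Complex.exp_eq_exp_ℂ, NormedSpace.exp_eq_tsum_div]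

lemma Ep_S_rec (p z : ℂ) (hp : ∀ k : ℕ, (1:ℂ) - p + k ≠ 0) :
    ∑' k : ℕ, (-z) ^ k / ((k.factorial : ℂ) * (1 - p + k))
      = Complex.exp (-z) / (1 - p)
        + z / (1 - p) * ∑' k : ℕ, (-z) ^ k / ((k.factorial : ℂ) * (1 - (p-1) + k)) := by
  have h1p : (1:ℂ) - p ≠ 0 := by simpa using hp 0
  have hS : Summable (fun k : ℕ => (-z) ^ k / ((k.factorial : ℂ) * (1 - p + k))) :=
    (Ep_summable_norm p z).of_norm
  have hS' : Summable (fun k : ℕ => (-z) ^ k / ((k.factorial : ℂ) * (1 - (p-1) + k))) :=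
    (Ep_summable_norm (p-1) z).of_norm
  have hE := Ep_exp_summable z
  set g : ℕ → ℂ := fun k =>
    (-z) ^ k / (k.factorial : ℂ) / (1 - p) - (-z) ^ k / ((k.factorial : ℂ) * (1 - p + k)) with hgdef
  have hgsum : Summable g := (hE.div_const (1 - p)).sub hS
  have ht1 : ∑' k, g k = Complex.exp (-z) / (1 - p)
      - ∑' k : ℕ, (-z) ^ k / ((k.factorial : ℂ) * (1 - p + k)) := by
    rw [hgdef, Summable.tsum_sub (hE.div_const (1 - p)) hS, tsum_div_const, ← Ep_exp_tsum]
  have key : ∀ k : ℕ, g (k + 1)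
      = -(z / (1 - p)) * ((-z) ^ k / ((k.factorial : ℂ) * (1 - (p-1) + k))) := by
    intro k
    have hfac : (k.factorial : ℂ) ≠ 0 := Nat.cast_ne_zero.mpr k.factorial_ne_zero
    have hcast : ((k+1 : ℕ) : ℂ) = (k : ℂ) + 1 := by push_cast; ring
    have hk3 : (1:ℂ) - p + ((k:ℂ) + 1) ≠ 0 := by have := hp (k+1); rwa [hcast] at this
    have hk2 : (1:ℂ) - (p - 1) + k ≠ 0 := by
      intro h0; apply hk3; linear_combination h0
    have hk1 : ((k:ℂ) + 1) ≠ 0 := Nat.cast_add_one_ne_zero k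
    have hfs : ((k+1).factorial : ℂ) = ((k:ℂ) + 1) * (k.factorial : ℂ) := by
      rw [Nat.factorial_succ]; push_cast; ring
    rw [hgdef]
    simp only [pow_succ, hfs, hcast]
    field_simp
    ring
  have ht2 : ∑' k, g k = -(z / (1 - p))
      * ∑' k : ℕ, (-z) ^ k / ((k.factorial : ℂ) * (1 - (p-1) + k)) := by
    rw [Summable.tsum_eq_zero_add hgsum]
    have h0 : g 0 = 0 := by
      rw [hgdef]; simp
    rw [h0, zero_add]
    calc ∑' k, g (k+1) = ∑' k : ℕ, -(z / (1 - p))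
        * ((-z) ^ k / ((k.factorial : ℂ) * (1 - (p-1) + k))) := tsum_congr key
    _ = _ := tsum_mul_left
  rw [ht2] at ht1
  linear_combination ht1

lemma Ep_small_integral {p z : ℂ} (hp1 : p.re < 1) (hp : ∀ k : ℕ, (1:ℂ) - p + k ≠ 0) :
    ∫ t in Ioc (0:ℝ) 1, Complex.exp (-z * t) * (t:ℂ) ^ (-p)
      = ∑' k : ℕ, (-z) ^ k / ((k.factorial : ℂ) * (1 - p + k)) := by
  set F : ℕ → ℝ → ℂ := fun k t => ((-z) ^ k / (k.factorial : ℂ)) * (t:ℂ) ^ ((k:ℂ) - p) with hF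
  have hre : ∀ k : ℕ, ((k:ℂ) - p).re = k - p.re := by intro k; simp
  have hint : ∀ k : ℕ, IntegrableOn (F k) (Ioc 0 1) := by
    intro k
    apply Integrable.const_mul
    refine (intervalIntegrable_iff_integrableOn_Ioc_of_le zero_le_one).mp
      (intervalIntegral.intervalIntegrable_cpow' ?_)
    rw [hre k]; have : (0:ℝ) ≤ k := Nat.cast_nonneg k; linarith
  have hnorm : ∀ k : ℕ, ∫ t in Ioc (0:ℝ) 1, ‖F k t‖
      = (‖z‖ ^ k / k.factorial) * (1 / (k - p.re + 1)) := by
    intro k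
    have : ∫ t in Ioc (0:ℝ) 1, ‖F k t‖
        = ∫ t in Ioc (0:ℝ) 1, (‖z‖ ^ k / k.factorial) * t ^ ((k:ℝ) - p.re) := by
      apply setIntegral_congr_fun measurableSet_Ioc
      intro t ht
      rw [hF]
      simp only
      have hcp : ‖(t:ℂ) ^ ((k:ℂ) - p)‖ = t ^ ((k:ℝ) - p.re) := by
        rw [Complex.norm_cpow_eq_rpow_re_of_pos ht.1, hre k]
      rw [norm_mul, norm_div, norm_pow, norm_neg, Complex.norm_natCast, hcp]
    rw [this, integral_const_mul, ← intervalIntegral.integral_of_le zero_le_one,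
      integral_rpow (Or.inl (by linarith [Nat.cast_nonneg (α := ℝ) k]))]
    rw [Real.one_rpow, Real.zero_rpow (by linarith [Nat.cast_nonneg (α := ℝ) k])]
    ring
  have hsum : Summable fun k : ℕ => ∫ t in Ioc (0:ℝ) 1, ‖F k t‖ := by
    apply Summable.of_nonneg_of_le
      (fun k => integral_nonneg fun t => norm_nonneg _) (fun k => ?_)
      ((Real.summable_pow_div_factorial ‖z‖).mul_right (1 / (1 - p.re)))
    rw [hnorm k]
    apply mul_le_mul_of_nonneg_left _ (by positivity)
    apply one_div_le_one_div_of_le (by linarith)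
    have : (0:ℝ) ≤ k := Nat.cast_nonneg k
    linarith
  have hswap := MeasureTheory.integral_tsum_of_summable_integral_norm hint hsum
  have hterm : ∀ k : ℕ, ∫ t in Ioc (0:ℝ) 1, F k t
      = (-z) ^ k / ((k.factorial : ℂ) * (1 - p + k)) := by
    intro k
    rw [hF]
    simp only
    rw [integral_const_mul, ← intervalIntegral.integral_of_le zero_le_one,
      integral_cpow (Or.inl (by rw [hre k]; have : (0:ℝ) ≤ k := Nat.cast_nonneg k; linarith))]
    have h1 : ((k:ℂ) - p + 1) = 1 - p + k := by ring
    have h10 : ((k:ℂ) - p + 1) ≠ 0 := by rw [h1]; exact hp k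
    have hfac : (k.factorial : ℂ) ≠ 0 := Nat.cast_ne_zero.mpr k.factorial_ne_zero
    simp only [Complex.ofReal_one, Complex.ofReal_zero, Complex.one_cpow,
      Complex.zero_cpow h10, h1]
    field_simp
    rw [Complex.zero_cpow (hp k)]
    ring
  have hfeq : ∀ t ∈ Ioc (0:ℝ) 1, (∑' k, F k t) = Complex.exp (-z * t) * (t:ℂ) ^ (-p) := by
    intro t ht
    have ht0 : (t:ℂ) ≠ 0 := Complex.ofReal_ne_zero.mpr (ne_of_gt ht.1)
    have hexp : Complex.exp (-z * t) = ∑' k : ℕ, (-z * t) ^ k / (k.factorial : ℂ) := by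
      rw [neg_mul]; exact Ep_exp_tsum _
    rw [hexp, ← tsum_mul_right]
    apply tsum_congr
    intro k
    rw [hF]
    simp only
    rw [mul_pow, sub_eq_add_neg, Complex.cpow_add _ _ ht0, Complex.cpow_natCast]
    ring
  calc ∫ t in Ioc (0:ℝ) 1, Complex.exp (-z * t) * (t:ℂ) ^ (-p)
      = ∫ t in Ioc (0:ℝ) 1, ∑' k, F k t :=
        setIntegral_congr_fun measurableSet_Ioc (fun t ht => (hfeq t ht).symm)
    _ = ∑' k, ∫ t in Ioc (0:ℝ) 1, F k t := hswap.symm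
    _ = ∑' k : ℕ, (-z) ^ k / ((k.factorial : ℂ) * (1 - p + k)) := tsum_congr hterm

lemma Ep_halfline_real {p : ℂ} (hp1 : p.re < 1) {r : ℝ} (hr : 0 < r) :
    ∫ t in Ioi (0:ℝ), Complex.exp (-(r:ℂ) * t) * (t:ℂ) ^ (-p)
      = (r:ℂ) ^ (p - 1) * Complex.Gamma (1 - p) := by
  have ha : 0 < (1 - p).re := by simp [Complex.sub_re]; linarith
  have h := Complex.integral_cpow_mul_exp_neg_mul_Ioi ha hr
  have hr0 : (r:ℂ) ≠ 0 := Complex.ofReal_ne_zero.mpr hr.ne'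
  have h2 : ∫ t in Ioi (0:ℝ), Complex.exp (-(r:ℂ) * t) * (t:ℂ) ^ (-p)
      = ∫ t in Ioi (0:ℝ), (t:ℂ) ^ ((1 - p) - 1) * Complex.exp (-((r:ℂ) * t)) := by
    apply setIntegral_congr_fun measurableSet_Ioi
    intro t ht
    have : (1 - p) - 1 = -p := by ring
    simp only [this, neg_mul, mul_comm]
    rw [mul_comm (t:ℂ) (-(r:ℂ)), neg_mul]
  rw [h2, h]
  have harg : ((r:ℂ)).arg ≠ Real.pi := by
    rw [Complex.arg_ofReal_of_nonneg hr.le]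
    exact (Real.pi_ne_zero).symm
  rw [one_div, Complex.inv_cpow _ _ harg, ← Complex.cpow_neg, neg_sub]

lemma Ep_halfline {p : ℂ} (hp1 : p.re < 1) {z : ℂ} (hz : 0 < z.re) :
    ∫ t in Ioi (0:ℝ), Complex.exp (-z * t) * (t:ℂ) ^ (-p)
      = z ^ (p - 1) * Complex.Gamma (1 - p) := by
  set U : Set ℂ := {w : ℂ | 0 < w.re} with hU
  have hU_open : IsOpen U := isOpen_lt continuous_const Complex.continuous_re
  set F : ℂ → ℂ := fun w => ∫ t in Ioi (0:ℝ), Complex.exp (-w * t) * (t:ℂ) ^ (-p) with hFdef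
  set G : ℂ → ℂ := fun w => w ^ (p - 1) * Complex.Gamma (1 - p) with hGdef
  have hF_diff : DifferentiableOn ℂ F U := by
    intro z₀ hz₀
    have hz₀re : 0 < z₀.re := hz₀
    set ε : ℝ := z₀.re / 2 with hε
    have hε_pos : 0 < ε := by positivity
    set F' : ℂ → ℝ → ℂ := fun w t => Complex.exp (-w * t) * -(t:ℂ) * (t:ℂ) ^ (-p) with hF'
    set bound : ℝ → ℝ := fun t => Real.exp (-ε * t) * t ^ (1 - p.re) with hbound
    have key := hasDerivAt_integral_of_dominated_loc_of_deriv_le (F := fun w (t:ℝ) =>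
        Complex.exp (-w * t) * (t:ℂ) ^ (-p)) (F' := F') (x₀ := z₀)
        (bound := bound) (μ := volume.restrict (Ioi 0)) (Metric.ball_mem_nhds z₀ hε_pos)
        (Eventually.of_forall fun w =>
          (Ep_cont le_rfl).aestronglyMeasurable measurableSet_Ioi)
        (Ep_integrableOn_Ioi_zero hz₀re hp1) ?_ ?_ ?_ ?_
    · exact (key.2.differentiableAt.differentiableWithinAt)
    · -- measurability of F' z₀
      apply ContinuousOn.aestronglyMeasurable ?_ measurableSet_Ioi
      intro t ht
      exact ((((Complex.continuous_exp.comp (by fun_prop)).continuousAt.continuousWithinAt).mul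
        (Complex.continuous_ofReal.neg.continuousAt.continuousWithinAt)).mul
        ((Complex.continuousAt_ofReal_cpow_const _ _
          (Or.inr (ne_of_gt ht))).continuousWithinAt))
    · -- bound
      filter_upwards [ae_restrict_mem measurableSet_Ioi] with t ht w hw
      have ht0 : (0:ℝ) < t := ht
      have hwre : ε ≤ w.re := by
        have : |w.re - z₀.re| ≤ ‖w - z₀‖ := by
          rw [← Complex.sub_re]; exact Complex.abs_re_le_norm _
        have h2 : ‖w - z₀‖ < ε := by rwa [Metric.mem_ball, Complex.dist_eq] at hw
        have := abs_sub_le_iff.mp (le_of_lt (lt_of_le_of_lt this h2))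
        rw [hε]; linarith [this.2]
      rw [hF']
      simp only
      rw [norm_mul, norm_mul, norm_neg,
        Complex.norm_exp]
      have h1 : ‖(t:ℂ)‖ = t := by rw [Complex.norm_real, Real.norm_of_nonneg ht0.le]
      have h2 : ‖(t:ℂ) ^ (-p)‖ = t ^ (-p.re) := by
        rw [Complex.norm_cpow_eq_rpow_re_of_pos ht0]
        norm_num
      have h5 : Real.exp ((-w * (t:ℂ)).re) ≤ Real.exp (-ε * t) := by
        apply Real.exp_le_exp.mpr
        have hre : (-w * (t:ℂ)).re = -(w.re * t) := by simp [Complex.mul_re]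
        rw [hre]
        nlinarith
      have h4 : t * t ^ (-p.re) = t ^ (1 - p.re) := by
        rw [show (1:ℝ) - p.re = 1 + (-p.re) from by ring, Real.rpow_add ht0, Real.rpow_one]
      rw [h1, h2, hbound]
      simp only
      calc Real.exp ((-w * (t:ℂ)).re) * t * t ^ (-p.re)
          ≤ Real.exp (-ε * t) * t * t ^ (-p.re) :=
            mul_le_mul_of_nonneg_right (mul_le_mul_of_nonneg_right h5 ht0.le)
              (Real.rpow_nonneg ht0.le _)
        _ = Real.exp (-ε * t) * t ^ (1 - p.re) := by rw [mul_assoc, h4]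
    · exact Ep_real_integrable hε_pos (by linarith)
    · -- differentiability
      filter_upwards [ae_restrict_mem measurableSet_Ioi] with t ht w hw
      have h1 : HasDerivAt (fun x : ℂ => -x * (t:ℂ)) (-(t:ℂ)) w := by
        simpa using ((hasDerivAt_id w).neg.mul_const ((t:ℂ)))
      exact h1.cexp.mul_const ((t:ℂ) ^ (-p))
  have hG_diff : DifferentiableOn ℂ G U := by
    intro w hw
    have hw' : w ∈ Complex.slitPlane := Or.inl hw
    have := (((hasDerivAt_id w).cpow_const (c := p - 1) hw')).differentiableAt
    exact (this.mul_const _).differentiableWithinAt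
  have hF_an : AnalyticOnNhd ℂ F U := hF_diff.analyticOnNhd hU_open
  have hG_an : AnalyticOnNhd ℂ G U := hG_diff.analyticOnNhd hU_open
  have hpre : IsPreconnected U := (convex_halfSpace_re_gt 0).isPreconnected
  have h1U : (1:ℂ) ∈ U := by simp [hU]
  have hfreq : ∃ᶠ w in 𝓝[≠] (1:ℂ), F w = G w := by
    have hte : Tendsto (fun n : ℕ => ((1 + 1/(n+1) : ℝ) : ℂ)) atTop (𝓝[≠] (1:ℂ)) := by
      apply tendsto_nhdsWithin_of_tendsto_nhds_of_eventually_within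
      · have h0 : Tendsto (fun n : ℕ => (1 + 1/(n+1) : ℝ)) atTop (𝓝 1) := by
          have := tendsto_one_div_add_atTop_nhds_zero_nat (𝕜 := ℝ)
          simpa using (tendsto_const_nhds (x := (1:ℝ)) (f := atTop)).add this
        have h1 := (Complex.continuous_ofReal.tendsto 1).comp h0
        rw [show ((1:ℝ):ℂ) = (1:ℂ) from by norm_num] at h1
        exact h1
      · apply Eventually.of_forall
        intro n
        simp only [mem_compl_iff, mem_singleton_iff]
        intro h
        rw [Complex.ofReal_eq_one] at h
        have : (0:ℝ) < 1/(n+1) := by positivity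
        linarith
    apply hte.frequently
    apply Frequently.of_forall
    intro n
    have hr : (0:ℝ) < 1 + 1/(n+1) := by positivity
    exact Ep_halfline_real hp1 hr
  exact (hF_an.eqOn_of_preconnected_of_frequently_eq hG_an hpre h1U hfreq) (show z ∈ U from hz)

lemma Ep_rec (p z : ℂ) (hz : 0 < z.re) (h1p : -p + 1 ≠ 0) :
    ∫ t in Ioi (1:ℝ), Complex.exp (-z * t) * (t:ℂ) ^ (-p)
      = z / (-p + 1) * (∫ t in Ioi (1:ℝ), Complex.exp (-z * t) * (t:ℂ) ^ (-(p-1)))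
        - Complex.exp (-z) / (-p + 1) := by
  have hEp := Ep_integrableOn_Ioi_one p z hz
  have hEp1 := Ep_integrableOn_Ioi_one (p-1) z hz
  have hexpe : (-p + 1 : ℂ) = -(p-1) := by ring
  set F : ℝ → ℂ := fun t => Complex.exp (-z * t) * ((t:ℂ) ^ (-p + 1) / (-p + 1)) with hFdef
  set f' : ℝ → ℂ := fun t => -z * Complex.exp (-z * t) * ((t:ℂ) ^ (-p+1) / (-p+1))
    + Complex.exp (-z * t) * (t:ℂ) ^ (-p) with hf'def
  have heq1 : (fun t : ℝ => -z * Complex.exp (-z * t) * ((t:ℂ) ^ (-p+1) / (-p+1)))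
      = fun t : ℝ => (-z / (-p+1)) * (Complex.exp (-z * t) * (t:ℂ) ^ (-(p-1))) := by
    funext t; rw [← hexpe]; ring
  have hint1 : IntegrableOn
      (fun t : ℝ => -z * Complex.exp (-z * t) * ((t:ℂ) ^ (-p+1) / (-p+1))) (Ioi 1) := by
    rw [heq1]; exact hEp1.const_mul _
  have hf'int : IntegrableOn f' (Ioi 1) := hint1.add hEp
  have hderiv : ∀ x ∈ Ici (1:ℝ), HasDerivAt F (f' x) x := by
    intro x hx
    have hx0 : x ≠ 0 := by intro h; rw [h] at hx; norm_num at hx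
    have hered : HasDerivAt (fun t : ℝ => Complex.exp (-z * t)) (-z * Complex.exp (-z * x)) x := by
      have h1 := ((hasDerivAt_id ((x:ℝ):ℂ)).const_mul (-z)).cexp
      have h2 := h1.comp_ofReal
      simpa [mul_comm] using h2
    have hcp : HasDerivAt (fun t : ℝ => (t:ℂ) ^ (-p+1) / (-p+1)) ((x:ℂ) ^ (-p)) x :=
      hasDerivAt_ofReal_cpow_const' hx0 (fun h => h1p (by rw [h]; ring))
    exact hered.mul hcp
  have htend : Tendsto F atTop (𝓝 (0:ℂ)) := by
    rw [tendsto_zero_iff_norm_tendsto_zero]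
    have h0 := tendsto_rpow_mul_exp_neg_mul_atTop_nhds_zero (1 - p.re) z.re hz
    have h0' := h0.div_const ‖(-p + 1 : ℂ)‖
    rw [zero_div] at h0'
    apply Tendsto.congr' ?_ h0'
    filter_upwards [eventually_gt_atTop (0:ℝ)] with t ht
    rw [hFdef]
    simp only
    rw [norm_mul, norm_div, Complex.norm_exp,
      Complex.norm_cpow_eq_rpow_re_of_pos ht]
    have e1 : (-z * (t:ℂ)).re = -z.re * t := by simp [Complex.mul_re]
    have e2 : (-p + 1).re = 1 - p.re := by simp [Complex.add_re, Complex.neg_re]; ring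
    rw [e1, e2]
    ring
  have key := integral_Ioi_of_hasDerivAt_of_tendsto' hderiv hf'int htend
  have hF1 : F 1 = Complex.exp (-z) / (-p + 1) := by
    rw [hFdef]
    simp only [Complex.ofReal_one, Complex.one_cpow, mul_one, mul_one_div]
  have hsplit : ∫ t in Ioi (1:ℝ), f' t
      = (-z / (-p+1)) * (∫ t in Ioi (1:ℝ), Complex.exp (-z * t) * (t:ℂ) ^ (-(p-1)))
        + ∫ t in Ioi (1:ℝ), Complex.exp (-z * t) * (t:ℂ) ^ (-p) := by
    rw [hf'def]
    rw [integral_add hint1 hEp, heq1, integral_const_mul]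
  rw [key, hF1] at hsplit
  linear_combination -hsplit

lemma Ep_base {p z : ℂ} (hz : 0 < z.re) (hp1 : p.re < 1) (hp : ∀ k : ℕ, (1:ℂ) - p + k ≠ 0) :
    (∫ t in Ioi (1:ℝ), Complex.exp (-z * t) * (t:ℂ) ^ (-p))
      = z ^ (p - 1) * Complex.Gamma (1 - p)
        - ∑' k : ℕ, (-z) ^ k / ((k.factorial : ℂ) * (1 - p + k)) := by
  have hI0 := Ep_integrableOn_Ioi_zero hz hp1
  have hIoc : IntegrableOn (fun t : ℝ => Complex.exp (-z * t) * (t:ℂ) ^ (-p)) (Ioc 0 1) :=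
    hI0.mono_set Ioc_subset_Ioi_self
  have hIoi1 := Ep_integrableOn_Ioi_one p z hz
  have hunion : ∫ t in Ioi (0:ℝ), Complex.exp (-z * t) * (t:ℂ) ^ (-p)
      = (∫ t in Ioc (0:ℝ) 1, Complex.exp (-z * t) * (t:ℂ) ^ (-p))
        + ∫ t in Ioi (1:ℝ), Complex.exp (-z * t) * (t:ℂ) ^ (-p) := by
    rw [← Ioc_union_Ioi_eq_Ioi (zero_le_one (α := ℝ)),
      setIntegral_union (Ioc_disjoint_Ioi le_rfl) measurableSet_Ioi hIoc hIoi1]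
  rw [Ep_halfline hp1 hz, Ep_small_integral hp1 hp] at hunion
  linear_combination -hunion

lemma Ep_main (n : ℕ) : ∀ p z : ℂ, 0 < z.re → p.re < n + 1 →
    (∀ k : ℕ, (1:ℂ) - p + k ≠ 0) →
    (∫ t in Ioi (1:ℝ), Complex.exp (-z * t) * (t:ℂ) ^ (-p))
      = z ^ (p - 1) * Complex.Gamma (1 - p)
        - ∑' k : ℕ, (-z) ^ k / ((k.factorial : ℂ) * (1 - p + k)) := by
  induction n with
  | zero =>
    intro p z hz h1 hp
    exact Ep_base hz (by norm_num at h1; linarith) hp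
  | succ n IH =>
    intro p z hz h1 hp
    by_cases hc : p.re < n + 1
    · exact IH p z hz hc hp
    · push_neg at hc
      have hz0 : z ≠ 0 := fun h => by rw [h] at hz; norm_num at hz
      have h1p : ((1:ℂ) - p) ≠ 0 := by simpa using hp 0
      have hp' : ∀ k : ℕ, (1:ℂ) - (p-1) + k ≠ 0 := by
        intro k h0
        apply hp (k+1)
        push_cast
        linear_combination h0
      have hprev := IH (p-1) z hz (by
        rw [Complex.sub_re, Complex.one_re]
        push_cast at h1 ⊢
        linarith) hp'
      have h1p' : (-p + 1 : ℂ) ≠ 0 := by rw [show (-p + 1 : ℂ) = 1 - p from by ring]; exact h1p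
      have hrec := Ep_rec p z hz h1p'
      rw [hprev] at hrec
      rw [hrec, Ep_S_rec p z hp]
      rw [show (1:ℂ) - (p - 1) = (1 - p) + 1 from by ring, Complex.Gamma_add_one _ h1p]
      rw [show p - 1 - 1 = p - 2 from by ring]
      rw [show p - 1 = (p - 2) + 1 from by ring, Complex.cpow_add _ _ hz0, Complex.cpow_one]
      field_simp
      ring

/-- Series expansion of the generalized exponential integral `E_p(z)` for `p` not a positive
integer: `E_p(z) = z^{p-1} Γ(1-p) − ∑_{k≥0} (−z)^k/(k!(1−p+k))`, the series converging
absolutely. -/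
theorem Ep_series_nonintegral (p z : ℂ) (hz : 0 < z.re) (hp : ∀ n : ℕ, p ≠ (n:ℂ) + 1) :
    Summable (fun k : ℕ => ‖(-z) ^ k / ((k.factorial : ℂ) * (1 - p + k))‖) ∧
    (∫ t in Ioi (1:ℝ), Complex.exp (-z * t) * (t:ℂ) ^ (-p))
      = z ^ (p - 1) * Complex.Gamma (1 - p)
        - ∑' k : ℕ, (-z) ^ k / ((k.factorial : ℂ) * (1 - p + k)) := by
  refine ⟨Ep_summable_norm p z, ?_⟩
  have hp' : ∀ k : ℕ, (1:ℂ) - p + k ≠ 0 := by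
    intro k h0
    apply hp k
    linear_combination -h0
  obtain ⟨n, hn⟩ := exists_nat_gt p.re
  exact Ep_main n p z hz (by linarith) hp'
end

section
/- Let f : H → C be holomorphic, 1-periodic, with absolutely convergent Fourier expansion f(z) = ∑_{n ≥ −n₀, n ≠ 0} a(n) e^{2πinz}, and let x > 0, s ∈ R, N ≥ 1. Then ∫_{i/√N}^{i/√N + ∞} e^{−xz} f(z) z^{s−1} dz = ∫_{i/√N}^{i/√N + 1} e^{−xz} f(z) ζ(1−s, ix/(2π), z) dz, where ζ(s, a, z) = ∑_{m≥0} e^{2πima} (z+m)^{−s} is the Lerch zeta function. -/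
open Complex MeasureTheory Set Filter

lemma lerch_aux_int (x : ℝ) (hx : 0 < x) (k : ℕ) :
    MeasureTheory.IntegrableOn (fun u : ℝ => Real.exp (-x*u) * (1+u)^k) (Set.Ioi 0) := by
  apply integrable_of_isBigO_exp_neg (b := x/2) (by positivity)
  · exact Continuous.continuousOn (by continuity)
  · have h1 : Tendsto (fun u : ℝ => (1+u)^k * Real.exp (-(x/2)*u)) atTop (nhds 0) := by
      have hcomp : Tendsto (fun u : ℝ => (x/2)*(1+u)) atTop atTop := by
        apply Tendsto.const_mul_atTop (by positivity)
        exact (tendsto_atTop_add_const_left _ _ tendsto_id)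
      have := (Real.tendsto_pow_mul_exp_neg_atTop_nhds_zero k).comp hcomp
      have h2 := this.mul_const ((x/2)⁻¹^k * Real.exp (x/2))
      rw [zero_mul] at h2
      apply h2.congr
      intro u
      simp only [Function.comp_apply]
      have he : Real.exp (-(x/2)*u) = Real.exp (-(x/2*(1+u))) * Real.exp (x/2) := by
        rw [← Real.exp_add]; ring_nf
      rw [mul_pow, he]
      field_simp
      rw [show (x / 2) ^ k * (1 + u) ^ k * (2 / x) ^ k = ((x / 2) * (2 / x)) ^ k * (1 + u) ^ k by rw [mul_pow]; ring,
        show (x / 2) * (2 / x) = 1 by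
          rw [div_mul_div_comm, mul_comm 2 x]; exact div_self (by positivity)]
      simp
    have h3 := (h1.isBigO_one ℝ).mul (Asymptotics.isBigO_refl (fun u : ℝ => Real.exp (-(x/2)*u)) atTop)
    apply h3.congr
    · intro u
      rw [mul_assoc, ← Real.exp_add]
      rw [show -(x/2)*u + -(x/2)*u = -x*u by ring]
      ring
    · intro u; simp

lemma lerch_aux_sum (k : ℕ) {r : ℝ} (hr0 : 0 < r) (hr1 : r < 1) :
    Summable (fun m : ℕ => (2+(m:ℝ))^k * r^m) := by
  have h1 : Summable (fun n : ℕ => (n:ℝ)^k * r^n) :=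
    summable_pow_mul_geometric_of_norm_lt_one k (by rwa [Real.norm_eq_abs, abs_of_pos hr0])
  have h2 := (summable_nat_add_iff 2).mpr h1
  have h3 := h2.mul_right (r⁻¹^2)
  apply h3.congr
  intro m
  push_cast
  field_simp
  ring

lemma lerch_aux_union : (⋃ m : ℕ, Set.Ioc ((m:ℝ)) (m+1)) = Set.Ioi (0:ℝ) := by
  ext u
  simp only [Set.mem_iUnion, Set.mem_Ioc, Set.mem_Ioi]
  constructor
  · rintro ⟨m, h1, h2⟩
    exact lt_of_le_of_lt (Nat.cast_nonneg m) h1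
  · intro hu
    have h1 : 1 ≤ ⌈u⌉₊ := Nat.ceil_pos.mpr hu
    refine ⟨⌈u⌉₊ - 1, ?_, ?_⟩
    · rw [Nat.cast_sub h1, Nat.cast_one]
      have := Nat.ceil_lt_add_one hu.le
      linarith
    · rw [Nat.cast_sub h1, Nat.cast_one]
      have := Nat.le_ceil u
      linarith

lemma lerch_aux_disj : Pairwise (Function.onFun Disjoint (fun m : ℕ => Set.Ioc ((m:ℝ)) (m+1))) := by
  intro i j hij
  rcases hij.lt_or_gt with h | h
  · rw [Function.onFun, Set.Ioc_disjoint_Ioc]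
    refine le_trans (min_le_left _ _) (le_trans ?_ (le_max_right _ _))
    exact_mod_cast h
  · rw [Function.onFun, Set.Ioc_disjoint_Ioc]
    refine le_trans (min_le_right _ _) (le_trans ?_ (le_max_left _ _))
    exact_mod_cast h

/-- Folding a ray integral into a period integral against the Lerch zeta function:
`∫_{i/√N}^{i/√N+∞} e^{−xz} f(z) z^{s−1} dz
  = ∫_{i/√N}^{i/√N+1} e^{−xz} f(z) ζ(1−s, ix/(2π), z) dz`,
where `ζ(s,a,z) = ∑_{m≥0} e^{2πima}(z+m)^{−s}` is the Lerch zeta function. -/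
theorem ray_integral_eq_lerch (f : ℂ → ℂ) (n₀ : ℕ) (a : ℤ → ℂ)
    (hf_hol : DifferentiableOn ℂ f {z : ℂ | 0 < z.im})
    (hper : ∀ z : ℂ, 0 < z.im → f (z + 1) = f z)
    (hcut : ∀ n : ℤ, n < -(n₀:ℤ) → a n = 0) (ha0 : a 0 = 0)
    (habs : ∀ z : ℂ, 0 < z.im →
      Summable (fun n : ℤ => ‖a n * Complex.exp (2 * Real.pi * Complex.I * n * z)‖))
    (hsum : ∀ z : ℂ, 0 < z.im →
      HasSum (fun n : ℤ => a n * Complex.exp (2 * Real.pi * Complex.I * n * z)) (f z))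
    (x s : ℝ) (hx : 0 < x) (N : ℕ) (hN : 1 ≤ N) :
    (∫ u in Ioi (0:ℝ),
        Complex.exp (-(x:ℂ) * (Complex.I / Real.sqrt N + u)) *
          f (Complex.I / Real.sqrt N + u) *
          (Complex.I / Real.sqrt N + (u:ℂ)) ^ ((s:ℂ) - 1))
      = ∫ u in (0:ℝ)..1,
          Complex.exp (-(x:ℂ) * (Complex.I / Real.sqrt N + u)) *
            f (Complex.I / Real.sqrt N + u) *
            ∑' m : ℕ, Complex.exp (2 * Real.pi * Complex.I * m *
                (Complex.I * x / (2 * Real.pi))) *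
              (Complex.I / Real.sqrt N + (u:ℂ) + m) ^ (-(1 - (s:ℂ))) := by
  clear hcut ha0 habs hsum
  set c : ℂ := Complex.I / ((Real.sqrt N : ℝ) : ℂ) with hc_def
  -- basic facts
  have hsN1 : 1 ≤ Real.sqrt N := by
    rw [show (1:ℝ) = Real.sqrt 1 by simp]
    exact Real.sqrt_le_sqrt (by exact_mod_cast hN)
  have hsNpos : 0 < Real.sqrt N := lt_of_lt_of_le one_pos hsN1
  have hcim : c.im = (Real.sqrt N)⁻¹ := by
    rw [hc_def, Complex.div_ofReal_im, Complex.I_im, one_div]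
  have hcre : c.re = 0 := by
    rw [hc_def, Complex.div_ofReal_re, Complex.I_re, zero_div]
  have hcimpos : 0 < c.im := by rw [hcim]; positivity
  have him : ∀ w : ℂ, w.im = 0 → 0 < (c + w).im := by
    intro w hw
    rw [Complex.add_im, hw, add_zero]; exact hcimpos
  have himu : ∀ u : ℝ, 0 < (c + (u:ℂ)).im := fun u => him _ (Complex.ofReal_im u)
  have himum : ∀ (u : ℝ) (m : ℕ), 0 < (c + (u:ℂ) + (m:ℂ)).im := by
    intro u m
    rw [add_assoc]
    exact him _ (by simp)
  -- abbreviation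
  set g : ℝ → ℂ := fun u =>
    Complex.exp (-(x:ℂ) * (c + u)) * f (c + u) * (c + (u:ℂ)) ^ ((s:ℂ) - 1) with hg_def
  -- periodicity for integer shifts
  have hperZ : ∀ (m : ℤ) (z : ℂ), 0 < z.im → f (z + m) = f z := by
    intro m
    induction m using Int.induction_on with
    | zero => intro z hz; simp
    | succ n ih =>
        intro z hz
        have h1 : z + ((n:ℤ) + 1 : ℤ) = (z + (n:ℤ)) + 1 := by push_cast; ring
        rw [h1, hper _ (by rw [Complex.add_im]; simpa using hz), ih z hz]
    | pred n ih =>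
        intro z hz
        have h2 : z + (-(n:ℤ) : ℤ) = (z + (-(n:ℤ) - 1 : ℤ)) + 1 := by push_cast; ring
        have h3 := ih z hz
        rw [h2, hper _ (by rw [Complex.add_im]; simpa using hz)] at h3
        exact h3
  have hperN : ∀ (m : ℕ) (z : ℂ), 0 < z.im → f (z + m) = f z := by
    intro m z hz
    have := hperZ (m : ℤ) z hz
    simpa using this
  -- continuity of u ↦ f (c + u)
  have hfc : Continuous (fun u : ℝ => f (c + u)) := by
    apply ContinuousOn.comp_continuous hf_hol.continuousOn (continuous_const.add Complex.continuous_ofReal)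
    intro u
    exact himu u
  -- bound on ‖f (c+u)‖
  obtain ⟨M0, hM0⟩ := (isCompact_Icc (a := (0:ℝ)) (b := 1)).exists_bound_of_continuousOn
    hfc.continuousOn
  set M : ℝ := max M0 0 with hM_def
  have hMnonneg : 0 ≤ M := le_max_right _ _
  have hM : ∀ u : ℝ, ‖f (c + (u:ℂ))‖ ≤ M := by
    intro u
    have hsplit : (c + (u:ℂ)) = (c + (Int.fract u : ℝ)) + (⌊u⌋ : ℤ) := by
      rw [Int.fract]
      push_cast
      ring
    rw [hsplit, hperZ _ _ (him _ (Complex.ofReal_im _))]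
    refine le_trans (hM0 _ ⟨Int.fract_nonneg u, (Int.fract_lt_one u).le⟩) (le_max_left _ _)
  -- constants
  set k : ℕ := ⌈max (s-1) 0⌉₊ with hk_def
  have hk : s - 1 ≤ (k : ℝ) := le_trans (le_max_left _ _) (Nat.le_ceil _)
  set K : ℝ := ((Real.sqrt N)⁻¹) ^ (s-1) with hK_def
  have hK0 : 0 ≤ K := Real.rpow_nonneg (by positivity) _
  -- norm computations
  have hnormg : ∀ u : ℝ, 0 ≤ u →
      ‖g u‖ ≤ M * (Real.exp (-x*u) * ((1+u)^k + K)) := by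
    intro u hu
    have hne : (c + (u:ℂ)) ≠ 0 := by
      intro h
      have := himu u
      rw [h] at this; simp at this
    have hcpow : ‖(c + (u:ℂ)) ^ ((s:ℂ) - 1)‖ = ‖c + (u:ℂ)‖ ^ (s-1 : ℝ) := by
      rw [Complex.norm_cpow_of_ne_zero hne]
      simp
    have hexpn : ‖Complex.exp (-(x:ℂ) * (c + u))‖ = Real.exp (-x*u) := by
      rw [Complex.norm_exp]
      congr 1
      simp [Complex.mul_re, hcre]
    have habs_le : ‖c + (u:ℂ)‖ ≤ 1 + u := by
      refine le_trans (norm_add_le _ _) ?_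
      rw [Complex.norm_real, Real.norm_eq_abs, _root_.abs_of_nonneg hu]
      have : ‖c‖ ≤ 1 := by
        rw [hc_def, norm_div, Complex.norm_I, Complex.norm_real, Real.norm_eq_abs, abs_of_pos hsNpos, one_div]
        rw [inv_le_one_iff₀]
        right; exact hsN1
      linarith
    have habs_ge : (Real.sqrt N)⁻¹ ≤ ‖c + (u:ℂ)‖ := by
      have h1 : (c + (u:ℂ)).im = (Real.sqrt N)⁻¹ := by
        rw [Complex.add_im, Complex.ofReal_im, add_zero, hcim]
      calc (Real.sqrt N)⁻¹ = (c + (u:ℂ)).im := h1.symm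
        _ ≤ |(c + (u:ℂ)).im| := le_abs_self _
        _ ≤ ‖c + (u:ℂ)‖ := Complex.abs_im_le_norm _
    have hpow_le : ‖c + (u:ℂ)‖ ^ (s-1 : ℝ) ≤ (1+u)^k + K := by
      rcases le_or_gt 0 (s-1) with hs1 | hs1
      · have h1 : ‖c + (u:ℂ)‖ ^ (s-1:ℝ) ≤ (1+u) ^ (s-1:ℝ) :=
          Real.rpow_le_rpow (norm_nonneg _) habs_le hs1
        have h2 : (1+u) ^ (s-1:ℝ) ≤ (1+u) ^ (k:ℝ) :=
          Real.rpow_le_rpow_of_exponent_le (by linarith) hk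
        have h3 : (1+u) ^ (k:ℝ) = (1+u)^k := Real.rpow_natCast _ _
        have : ‖c + (u:ℂ)‖ ^ (s-1:ℝ) ≤ (1+u)^k := by
          rw [← h3]; exact le_trans h1 h2
        exact le_trans this (le_add_of_nonneg_right hK0)
      · have h1 : ‖c + (u:ℂ)‖ ^ (s-1:ℝ) ≤ K := by
          rw [hK_def]
          exact Real.rpow_le_rpow_of_nonpos (by positivity) habs_ge hs1.le
        refine le_trans h1 (le_add_of_nonneg_left (by positivity))
    have : ‖g u‖ = Real.exp (-x*u) * ‖f (c + (u:ℂ))‖ *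
        (‖c + (u:ℂ)‖ ^ (s-1:ℝ)) := by
      rw [hg_def]
      simp only [norm_mul]
      rw [hcpow, hexpn]
    rw [this]
    calc Real.exp (-x*u) * ‖f (c + (u:ℂ))‖ * (‖c + (u:ℂ)‖ ^ (s-1:ℝ))
        ≤ Real.exp (-x*u) * M * ((1+u)^k + K) := by
          apply mul_le_mul
          · exact mul_le_mul_of_nonneg_left (hM u) (Real.exp_nonneg _)
          · exact hpow_le
          · positivity
          · positivity
      _ = M * (Real.exp (-x*u) * ((1+u)^k + K)) := by ring
  -- continuity of g
  have hgcont : Continuous g := by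
    rw [hg_def]
    apply Continuous.mul
    · apply Continuous.mul
      · exact Continuous.cexp (continuous_const.mul (continuous_const.add Complex.continuous_ofReal))
      · exact hfc
    · apply Continuous.cpow (continuous_const.add Complex.continuous_ofReal) continuous_const
      intro u
      exact Complex.mem_slitPlane_iff.mpr (Or.inr (himu u).ne')
  -- integrability of g on Ioi 0
  have hphi : IntegrableOn (fun u : ℝ => M * (Real.exp (-x*u) * ((1+u)^k + K))) (Ioi 0) := by
    apply Integrable.const_mul
    have h1 := lerch_aux_int x hx k
    have h2 := (exp_neg_integrableOn_Ioi 0 hx).mul_const K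
    apply (h1.add h2).congr
    apply ae_of_all
    intro u
    show Real.exp (-x*u) * (1+u)^k + Real.exp (-x*u) * K = Real.exp (-x*u) * ((1+u)^k + K)
    ring
  have hgint : IntegrableOn g (Ioi 0) := by
    apply Integrable.mono' hphi (hgcont.aestronglyMeasurable.restrict)
    rw [ae_restrict_iff' measurableSet_Ioi]
    exact ae_of_all _ (fun u hu => hnormg u (le_of_lt hu))
  -- pointwise identity for the summand
  have hpt : ∀ (u : ℝ) (m : ℕ),
      Complex.exp (-(x:ℂ) * (c + u)) * f (c + u) *
        (Complex.exp (2 * (Real.pi:ℂ) * Complex.I * m * (Complex.I * x / (2 * Real.pi))) *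
          (c + (u:ℂ) + m) ^ (-(1 - (s:ℂ)))) = g (u + m) := by
    intro u m
    have hπ : (Real.pi : ℂ) ≠ 0 := Complex.ofReal_ne_zero.mpr Real.pi_ne_zero
    have harg : (2 * (Real.pi:ℂ) * Complex.I * m * (Complex.I * x / (2 * Real.pi)))
        = -((x:ℂ) * m) := by
      field_simp
      ring_nf
      rw [Complex.I_sq]
      ring
    have hcast : ((u + (m:ℝ) : ℝ) : ℂ) = (u:ℂ) + (m:ℂ) := by push_cast; ring
    have hpow : (-(1 - (s:ℂ))) = (s:ℂ) - 1 := by ring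
    have hfp : f (c + ((u:ℂ) + (m:ℂ))) = f (c + (u:ℂ)) := by
      rw [← add_assoc]
      exact hperN m _ (himu u)
    have hexp : Complex.exp (-(x:ℂ) * (c + u)) * Complex.exp (-((x:ℂ) * m))
        = Complex.exp (-(x:ℂ) * (c + ((u:ℂ) + (m:ℂ)))) := by
      rw [← Complex.exp_add]
      congr 1
      ring
    rw [hg_def]
    simp only [hcast]
    rw [harg, hpow, hfp, ← hexp, ← add_assoc]
    ring
  -- the right-hand integrand equals the folded sum
  have hsum_eq : ∀ u : ℝ,
      Complex.exp (-(x:ℂ) * (c + u)) * f (c + u) *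
        ∑' m : ℕ, Complex.exp (2 * (Real.pi:ℂ) * Complex.I * m *
            (Complex.I * x / (2 * Real.pi))) * (c + (u:ℂ) + m) ^ (-(1 - (s:ℂ)))
      = ∑' m : ℕ, g (u + m) := by
    intro u
    rw [← tsum_mul_left]
    exact tsum_congr (fun m => hpt u m)
  -- integrability and bounds for the translates
  have hFint : ∀ m : ℕ, Integrable (fun u : ℝ => g (u + m)) (volume.restrict (Ioc 0 1)) := by
    intro m
    exact (hgcont.comp (continuous_add_right (m:ℝ))).integrableOn_Ioc
  have hFbound : ∀ m : ℕ, ∀ u ∈ Ioc (0:ℝ) 1,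
      ‖g (u + m)‖ ≤ M * (Real.exp (-x*m) * ((2+(m:ℝ))^k + K)) := by
    intro m u hu
    have hum : (0:ℝ) ≤ u + m := by
      have := hu.1
      have hm0 : (0:ℝ) ≤ (m:ℝ) := Nat.cast_nonneg m
      linarith
    refine le_trans (hnormg (u + m) hum) ?_
    have h1 : Real.exp (-x*(u + m)) ≤ Real.exp (-x*m) := by
      apply Real.exp_le_exp.mpr
      nlinarith [hu.1]
    have h2 : (1+(u + (m:ℝ)))^k ≤ (2+(m:ℝ))^k := by
      apply pow_le_pow_left₀ (by linarith)
      linarith [hu.2]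
    have hx1 : (0:ℝ) ≤ Real.exp (-x*(u+m)) := Real.exp_nonneg _
    have hx2 : (0:ℝ) ≤ (1+(u+(m:ℝ)))^k := by positivity
    apply mul_le_mul_of_nonneg_left _ hMnonneg
    apply mul_le_mul h1 _ (add_nonneg (by positivity) hK0) (Real.exp_nonneg _)
    exact add_le_add h2 le_rfl
  -- summability of integral norms
  have hr0 : (0:ℝ) < Real.exp (-x) := Real.exp_pos _
  have hr1 : Real.exp (-x) < 1 := Real.exp_lt_one_iff.mpr (by linarith)
  have hDsum : Summable (fun m : ℕ => M * (Real.exp (-x*m) * ((2+(m:ℝ))^k + K))) := by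
    have hbase := lerch_aux_sum k hr0 hr1
    have hgeo := (summable_geometric_of_lt_one hr0.le hr1).mul_left K
    have := ((hbase.add hgeo).mul_left M)
    apply this.congr
    intro m
    have : Real.exp (-x * m) = Real.exp (-x) ^ m := by
      rw [← Real.exp_nat_mul]; ring_nf
    rw [this]
    ring
  have hnorm_sum : Summable (fun m : ℕ => ∫ u in Ioc (0:ℝ) 1, ‖g (u + m)‖) := by
    apply Summable.of_nonneg_of_le
      (fun m => integral_nonneg (fun u => norm_nonneg _)) _ hDsum
    intro m
    calc (∫ u in Ioc (0:ℝ) 1, ‖g (u + m)‖)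
        ≤ ∫ _u in Ioc (0:ℝ) 1, M * (Real.exp (-x*m) * ((2+(m:ℝ))^k + K)) := by
          apply setIntegral_mono_on (hFint m).norm (integrableOn_const (by simp))
            measurableSet_Ioc
          exact hFbound m
      _ = M * (Real.exp (-x*m) * ((2+(m:ℝ))^k + K)) := by
          rw [setIntegral_const]
          simp [Real.volume_Ioc]
  -- interchange sum and integral
  have hinterchange : (∑' m : ℕ, ∫ u in Ioc (0:ℝ) 1, g (u + m))
      = ∫ u in Ioc (0:ℝ) 1, ∑' m : ℕ, g (u + m) :=
    integral_tsum_of_summable_integral_norm hFint hnorm_sum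
  -- translation identity
  have hshift : ∀ m : ℕ, (∫ u in Ioc (0:ℝ) 1, g (u + m))
      = ∫ u in Ioc ((m:ℝ)) (m+1), g u := by
    intro m
    rw [← intervalIntegral.integral_of_le zero_le_one,
      ← intervalIntegral.integral_of_le (by linarith [Nat.cast_nonneg (α := ℝ) m] : (m:ℝ) ≤ m+1)]
    rw [intervalIntegral.integral_comp_add_right]
    rw [zero_add, add_comm 1 (m:ℝ)]
  -- splitting the ray integral
  have hIoi : (∫ u in Ioi (0:ℝ), g u) = ∑' m : ℕ, ∫ u in Ioc ((m:ℝ)) (m+1), g u := by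
    rw [← lerch_aux_union]
    exact integral_iUnion (fun m => measurableSet_Ioc) lerch_aux_disj
      (by rw [lerch_aux_union]; exact hgint)
  -- final assembly
  calc (∫ u in Ioi (0:ℝ), g u)
      = ∑' m : ℕ, ∫ u in Ioc ((m:ℝ)) (m+1), g u := hIoi
    _ = ∑' m : ℕ, ∫ u in Ioc (0:ℝ) 1, g (u + m) := tsum_congr (fun m => (hshift m).symm)
    _ = ∫ u in Ioc (0:ℝ) 1, ∑' m : ℕ, g (u + m) := hinterchange
    _ = ∫ u in Ioc (0:ℝ) 1,
          Complex.exp (-(x:ℂ) * (c + u)) * f (c + u) *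
            ∑' m : ℕ, Complex.exp (2 * (Real.pi:ℂ) * Complex.I * m *
                (Complex.I * x / (2 * Real.pi))) * (c + (u:ℂ) + m) ^ (-(1 - (s:ℂ))) := by
          refine setIntegral_congr_fun measurableSet_Ioc (fun u _ => ?_)
          exact (hsum_eq u).symm
    _ = ∫ u in (0:ℝ)..1,
          Complex.exp (-(x:ℂ) * (c + u)) * f (c + u) *
            ∑' m : ℕ, Complex.exp (2 * (Real.pi:ℂ) * Complex.I * m *
                (Complex.I * x / (2 * Real.pi))) * (c + (u:ℂ) + m) ^ (-(1 - (s:ℂ))) :=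
      (intervalIntegral.integral_of_le zero_le_one).symm
end

section
/- Let f be a holomorphic cusp form of weight k ∈ 2N for Γ₀(N) with Fourier expansion f(z) = ∑_{n>0} a(n) e^{2πinz}, satisfying f|_k W_N = f for W_N = [[0, −1/√N],[√N, 0]]. Then for all s ∈ C, the completed L-function satisfies L*_f(s) := (√N/(2π))^s Γ(s) L_f(s) = ∑_{n>0} a(n) E_{1−s}(2πn/√N) + i^k ∑_{n>0} a(n) E_{s−k+1}(2πn/√N), and both series converge absolutely. -/
open Complex MeasureTheory Set Filter Asymptotics

lemma aux_norm_eq (b : ℝ) (w : ℂ) {t : ℝ} (ht : 0 < t) :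
    ‖Complex.exp (-(b:ℂ) * t) * (t:ℂ) ^ w‖ = Real.exp (-b * t) * t ^ w.re := by
  rw [norm_mul, Complex.norm_exp,
    Complex.norm_cpow_eq_rpow_re_of_pos ht]
  congr 1
  push_cast
  simp

lemma aux_real_int {b : ℝ} (hb : 0 < b) (σ : ℝ) :
    IntegrableOn (fun t : ℝ => Real.exp (-b * t) * t ^ σ) (Ioi 1) := by
  have hcont : ContinuousOn (fun t : ℝ => Real.exp (-b * t) * t ^ σ) (Ici 1) := by
    refine ContinuousOn.mul (Continuous.continuousOn (by continuity)) ?_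
    exact fun t ht => (Real.continuousAt_rpow_const t σ (Or.inl (ne_of_gt (lt_of_lt_of_le zero_lt_one ht)))).continuousWithinAt
  have hO : (fun t : ℝ => Real.exp (-b * t) * t ^ σ) =O[atTop] fun t => Real.exp (-(b/2) * t) := by
    have h1 : (fun t : ℝ => t ^ σ) =o[atTop] fun t => Real.exp ((b/2) * t) :=
      isLittleO_rpow_exp_pos_mul_atTop σ (half_pos hb)
    have h2 := (isBigO_refl (fun t : ℝ => Real.exp (-b * t)) atTop).mul h1.isBigO
    refine h2.congr' (by filter_upwards with t using by ring) ?_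
    filter_upwards with t
    rw [← Real.exp_add]
    ring_nf
  exact integrable_of_isBigO_exp_neg (half_pos hb) hcont hO

lemma aux_cpow_int {b : ℝ} (hb : 0 < b) (w : ℂ) :
    IntegrableOn (fun t : ℝ => Complex.exp (-(b:ℂ) * t) * (t:ℂ) ^ w) (Ioi 1) := by
  refine Integrable.mono' (aux_real_int hb w.re) ?_ ?_
  · refine (ContinuousOn.mul ?_ ?_).aestronglyMeasurable measurableSet_Ioi
    · exact Continuous.continuousOn (by continuity)
    · intro t ht
      refine (Complex.continuousAt_ofReal_cpow_const t w (Or.inr ?_)).continuousWithinAt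
      exact ne_of_gt (lt_trans one_pos ht)
  · filter_upwards [ae_restrict_mem measurableSet_Ioi] with t ht
    rw [aux_norm_eq b w (lt_trans one_pos ht)]

lemma aux_int_bound {b c : ℝ} (hc : 0 < c) (hbc : c ≤ b) (w : ℂ) :
    ‖∫ t in Ioi (1:ℝ), Complex.exp (-(b:ℂ) * t) * (t:ℂ) ^ w‖ ≤
      (Real.exp c * ∫ t in Ioi (1:ℝ), Real.exp (-c * t) * t ^ w.re) * Real.exp (-b) := by
  have hb : 0 < b := lt_of_lt_of_le hc hbc
  calc ‖∫ t in Ioi (1:ℝ), Complex.exp (-(b:ℂ) * t) * (t:ℂ) ^ w‖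
      ≤ ∫ t in Ioi (1:ℝ), ‖Complex.exp (-(b:ℂ) * t) * (t:ℂ) ^ w‖ :=
        norm_integral_le_integral_norm _
    _ ≤ ∫ t in Ioi (1:ℝ), (Real.exp c * Real.exp (-b)) * (Real.exp (-c * t) * t ^ w.re) := by
        refine setIntegral_mono_on ((aux_cpow_int hb w).norm) ?_ measurableSet_Ioi ?_
        · exact ((aux_real_int hc w.re).const_mul _)
        · intro t ht
          rw [aux_norm_eq b w (lt_trans one_pos ht)]
          have h1 : Real.exp (-b * t) ≤ Real.exp c * Real.exp (-b) * Real.exp (-c * t) := by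
            rw [← Real.exp_add, ← Real.exp_add, Real.exp_le_exp]
            nlinarith [le_of_lt (show (1:ℝ) < t from ht)]
          have h2 : (0:ℝ) ≤ t ^ w.re := Real.rpow_nonneg (le_of_lt (lt_trans one_pos ht)) _
          nlinarith [Real.exp_pos (-b * t)]
    _ = (Real.exp c * ∫ t in Ioi (1:ℝ), Real.exp (-c * t) * t ^ w.re) * Real.exp (-b) := by
        rw [integral_const_mul]; ring

private lemma lemma_key (a : ℕ → ℂ) (ha0 : a 0 = 0) (N : ℕ) (hrtN : 0 < Real.sqrt N)
    (c : ℝ) (hc : 0 < c) (hc_def : c = 2 * Real.pi / Real.sqrt N)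
    (g : ℝ → ℂ) (hg_cont : ContinuousOn g (Ioi 0))
    (hg_sum : ∀ t : ℝ, 0 < t →
      HasSum (fun n : ℕ => a n * ((Real.exp (-(c * n) * t) : ℝ) : ℂ)) (g t))
    (hsummable : ∀ x : ℝ, 0 < x → Summable (fun n : ℕ => ‖a n‖ * Real.exp (-(c * n) * x))) :
    ∀ w : ℂ,
      Summable (fun n : ℕ => ‖a n * ∫ t in Ioi (1:ℝ),
        Complex.exp (-((2 * Real.pi * n / Real.sqrt N : ℝ) : ℂ) * t) * (t:ℂ) ^ (w - 1)‖) ∧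
      mellin ((Ioi 1).indicator g) w = ∑' n : ℕ, a n * ∫ t in Ioi (1:ℝ),
        Complex.exp (-((2 * Real.pi * n / Real.sqrt N : ℝ) : ℂ) * t) * (t:ℂ) ^ (w - 1) := by
  intro w
  have hcn : ∀ n : ℕ, (2 * Real.pi * (n:ℝ) / Real.sqrt N : ℝ) = c * n := by
    intro n; rw [hc_def]; ring
  simp only [hcn]
  set B : ℝ := ∫ t in Ioi (1:ℝ), Real.exp (-c * t) * t ^ ((w - 1).re) with hB_def
  have hB0 : 0 ≤ B := by
    rw [hB_def]
    refine setIntegral_nonneg measurableSet_Ioi fun t ht => ?_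
    have : (0:ℝ) < t := lt_trans one_pos ht
    positivity
  -- rewrite exp in ℂ form
  have hexp : ∀ n : ℕ, ∀ t : ℝ, ((Real.exp (-(c * n) * t) : ℝ) : ℂ)
      = Complex.exp (-((c * n : ℝ) : ℂ) * t) := by
    intro n t
    rw [Complex.ofReal_exp]
    congr 1
    push_cast
    ring
  -- integrability of each term
  have hInt : ∀ n : ℕ, Integrable
      (fun t : ℝ => (t:ℂ) ^ (w - 1) * (a n * ((Real.exp (-(c * n) * t) : ℝ) : ℂ)))
      (volume.restrict (Ioi 1)) := by
    intro n
    rcases Nat.eq_zero_or_pos n with rfl | hn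
    · simp only [ha0, zero_mul, mul_zero]
      exact integrable_zero _ _ _
    · have hcn0 : 0 < c * n := by positivity
      have h := (aux_cpow_int hcn0 (w - 1)).const_mul (a n)
      have heq : (fun t : ℝ => (t:ℂ) ^ (w - 1) * (a n * ((Real.exp (-(c * n) * t) : ℝ) : ℂ)))
          = (fun t : ℝ => a n * (Complex.exp (-((c * n : ℝ):ℂ) * t) * (t:ℂ) ^ (w - 1))) := by
        funext t
        rw [hexp n t]
        ring
      rw [heq]
      exact h
  -- bound on the integrals of norms
  have hNormBound : ∀ n : ℕ, 1 ≤ n →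
      (∫ t in Ioi (1:ℝ), ‖(t:ℂ) ^ (w - 1) * (a n * ((Real.exp (-(c * n) * t) : ℝ) : ℂ))‖)
        ≤ (Real.exp c * B) * (‖a n‖ * Real.exp (-(c * n) * 1)) := by
    intro n hn
    have hcn0 : 0 < c * n := by positivity
    have h1n : (1:ℝ) ≤ (n:ℝ) := by exact_mod_cast hn
    have hcc : c ≤ c * n := by nlinarith
    have h1 : (∫ t in Ioi (1:ℝ), ‖(t:ℂ) ^ (w - 1) * (a n * ((Real.exp (-(c * n) * t) : ℝ) : ℂ))‖)
        = ‖a n‖ * ∫ t in Ioi (1:ℝ), Real.exp (-(c * n) * t) * t ^ ((w-1).re) := by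
      rw [← integral_const_mul]
      refine setIntegral_congr_fun measurableSet_Ioi fun t ht => ?_
      have ht0 : (0:ℝ) < t := lt_trans one_pos ht
      rw [hexp n t]
      simp only [norm_mul]
      rw [Complex.norm_cpow_eq_rpow_re_of_pos ht0, Complex.norm_exp,
        show -((c * (n:ℕ) : ℝ):ℂ) * (t:ℂ) = ((-(c * (n:ℕ)) * t : ℝ):ℂ) by push_cast; ring,
        Complex.ofReal_re]
      ring
    rw [h1]
    have h2 : (∫ t in Ioi (1:ℝ), Real.exp (-(c * n) * t) * t ^ ((w-1).re))
        ≤ (Real.exp c * B) * Real.exp (-(c * n)) := by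
      calc (∫ t in Ioi (1:ℝ), Real.exp (-(c * n) * t) * t ^ ((w-1).re))
          ≤ ∫ t in Ioi (1:ℝ), (Real.exp c * Real.exp (-(c*n))) * (Real.exp (-c * t) * t ^ ((w-1).re)) := by
            refine setIntegral_mono_on (aux_real_int hcn0 _) ((aux_real_int hc _).const_mul _)
              measurableSet_Ioi fun t ht => ?_
            have ht0 : (0:ℝ) < t := lt_trans one_pos ht
            have hrp : (0:ℝ) ≤ t ^ ((w-1).re) := Real.rpow_nonneg ht0.le _
            have hexple : Real.exp (-(c*n) * t) ≤ Real.exp c * Real.exp (-(c*n)) * Real.exp (-c * t) := by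
              rw [← Real.exp_add, ← Real.exp_add, Real.exp_le_exp]
              have ht1 : (1:ℝ) ≤ t := le_of_lt ht
              nlinarith [mul_nonneg (sub_nonneg.mpr hcc) (sub_nonneg.mpr ht1)]
            nlinarith [Real.exp_pos (-(c*n)*t)]
        _ = (Real.exp c * B) * Real.exp (-(c * n)) := by
            rw [integral_const_mul, hB_def]
            ring
    calc ‖a n‖ * ∫ t in Ioi (1:ℝ), Real.exp (-(c * n) * t) * t ^ ((w-1).re)
        ≤ ‖a n‖ * ((Real.exp c * B) * Real.exp (-(c * n))) :=
          mul_le_mul_of_nonneg_left h2 (norm_nonneg _)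
      _ = (Real.exp c * B) * (‖a n‖ * Real.exp (-(c * n) * 1)) := by rw [mul_one]; ring
  -- summability of integrals of norms
  have hNormSummable : Summable (fun n : ℕ =>
      ∫ t in Ioi (1:ℝ), ‖(t:ℂ) ^ (w - 1) * (a n * ((Real.exp (-(c * n) * t) : ℝ) : ℂ))‖) := by
    refine Summable.of_nonneg_of_le
      (fun n => setIntegral_nonneg measurableSet_Ioi fun t ht => norm_nonneg _)
      (fun n => ?_) (((hsummable 1 one_pos).mul_left (Real.exp c * B)))
    rcases Nat.eq_zero_or_pos n with rfl | hn
    · simp only [ha0, zero_mul, mul_zero, norm_zero]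
      simp [Real.exp_pos]
    · exact hNormBound n hn
  constructor
  · -- summability of the series of norms
    refine Summable.of_nonneg_of_le (fun n => norm_nonneg _) (fun n => ?_)
      ((hsummable 1 one_pos).mul_left (Real.exp c * B))
    rcases Nat.eq_zero_or_pos n with rfl | hn
    · simp [ha0]
    · have h1n : (1:ℝ) ≤ (n:ℝ) := by exact_mod_cast hn
      have hcc : c ≤ c * n := by nlinarith
      rw [norm_mul]
      have hb := aux_int_bound hc hcc (w - 1)
      calc ‖a n‖ * ‖∫ t in Ioi (1:ℝ), Complex.exp (-((c * (n:ℕ) : ℝ) : ℂ) * t) * (t:ℂ) ^ (w - 1)‖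
          ≤ ‖a n‖ * ((Real.exp c * B) * Real.exp (-(c * n))) :=
            mul_le_mul_of_nonneg_left hb (norm_nonneg _)
        _ = (Real.exp c * B) * (‖a n‖ * Real.exp (-(c * n) * 1)) := by rw [mul_one]; ring
  · -- the mellin identity
    have hind : (fun t : ℝ => (t:ℂ) ^ (w - 1) • (Ioi 1).indicator g t)
        = (Ioi 1).indicator (fun t : ℝ => (t:ℂ) ^ (w - 1) * g t) := by
      funext t
      by_cases h : t ∈ Ioi (1:ℝ)
      · simp [indicator_of_mem h, smul_eq_mul]
      · simp [indicator_of_notMem h]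
    have hmellin : mellin ((Ioi 1).indicator g) w = ∫ t in Ioi (1:ℝ), (t:ℂ) ^ (w - 1) * g t := by
      rw [mellin, hind, setIntegral_indicator measurableSet_Ioi,
        show Ioi (0:ℝ) ∩ Ioi 1 = Ioi 1 from by rw [Ioi_inter_Ioi]; norm_num]
    have hHS := hasSum_integral_of_summable_integral_norm (μ := volume.restrict (Ioi 1))
      hInt hNormSummable
    have hpt : (∫ t in Ioi (1:ℝ), (∑' n : ℕ, (t:ℂ) ^ (w - 1) * (a n * ((Real.exp (-(c * n) * t) : ℝ) : ℂ))))
        = ∫ t in Ioi (1:ℝ), (t:ℂ) ^ (w - 1) * g t := by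
      refine setIntegral_congr_fun measurableSet_Ioi fun t ht => ?_
      exact ((hg_sum t (lt_trans one_pos ht)).mul_left _).tsum_eq
    rw [hmellin, ← hpt, ← hHS.tsum_eq]
    refine tsum_congr fun n => ?_
    rw [← integral_const_mul]
    refine setIntegral_congr_fun measurableSet_Ioi fun t ht => ?_
    rw [hexp n t]
    ring


private lemma lemma_mdiff (g : ℝ → ℂ) (c K : ℝ) (hc : 0 < c)
    (hg_cont : ContinuousOn g (Ioi 0))
    (hg_decay : ∀ t : ℝ, 1 ≤ t → ‖g t‖ ≤ K * Real.exp (-c * t)) :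
    Differentiable ℂ (mellin ((Ioi 1).indicator g)) := by
  set F := (Ioi 1).indicator g with hF_def
  have hgInt : IntegrableOn g (Ioi 1) := by
    refine Integrable.mono' ((exp_neg_integrableOn_Ioi 1 hc).const_mul K)
      ((hg_cont.mono fun t (ht : t ∈ Ioi 1) => lt_trans one_pos ht).aestronglyMeasurable
        measurableSet_Ioi) ?_
    filter_upwards [ae_restrict_mem measurableSet_Ioi] with t ht
    exact hg_decay t (le_of_lt ht)
  have hF_int : IntegrableOn F (Ioi 0) := by
    rw [hF_def, IntegrableOn, integrable_indicator_iff measurableSet_Ioi]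
    rw [IntegrableOn, Measure.restrict_restrict measurableSet_Ioi,
      show Ioi (1:ℝ) ∩ Ioi 0 = Ioi 1 from by rw [Ioi_inter_Ioi]; norm_num]
    exact hgInt
  have hFloc : LocallyIntegrableOn F (Ioi 0) := hF_int.locallyIntegrableOn
  have hFtop : F =O[atTop] fun t => Real.exp (-c * t) := by
    rw [Asymptotics.isBigO_iff]
    refine ⟨K, ?_⟩
    filter_upwards [Filter.eventually_gt_atTop 1] with t ht
    rw [hF_def, Set.indicator_of_mem (mem_Ioi.mpr ht), Real.norm_eq_abs, Real.abs_exp]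
    exact hg_decay t ht.le
  intro w
  refine (mellin_differentiableAt_of_isBigO_rpow_exp hc hFloc hFtop ?_ (sub_one_lt w.re))
  have h0 : ∀ᶠ t in nhdsWithin 0 (Ioi 0), F t = 0 := by
    filter_upwards [Ioo_mem_nhdsGT_of_mem (show (0:ℝ) ∈ Ico (0:ℝ) 1 by norm_num)] with t ht
    exact indicator_of_notMem (by simp only [mem_Ioi, not_lt]; exact ht.2.le) _
  exact (Asymptotics.isBigO_zero _ _).congr' (Filter.EventuallyEq.symm h0) Filter.EventuallyEq.rfl

private lemma lemma_split (N k : ℕ) (hk : Even k) (hk0 : 0 < k) (a : ℕ → ℂ) (ha0 : a 0 = 0)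
    (C : ℝ) (hC : ∀ n : ℕ, 1 ≤ n → ‖a n‖ ≤ C * (n : ℝ) ^ (k / 2))
    (hN0 : (0:ℝ) < (N:ℝ)) (hrtN : 0 < Real.sqrt N)
    (c K : ℝ) (hc : 0 < c) (hc_def : c = 2 * Real.pi / Real.sqrt N)
    (g : ℝ → ℂ) (hg_cont : ContinuousOn g (Ioi 0))
    (hg_sum : ∀ t : ℝ, 0 < t →
      HasSum (fun n : ℕ => a n * ((Real.exp (-(c * n) * t) : ℝ) : ℂ)) (g t))
    (hg_decay : ∀ t : ℝ, 1 ≤ t → ‖g t‖ ≤ K * Real.exp (-c * t))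
    (hg_inv : ∀ t : ℝ, 0 < t → g t⁻¹ = Complex.I ^ k * (t:ℂ) ^ k * g t)
    (Λ : ℂ → ℂ)
    (hΛ_eq : ∀ s : ℂ, (k : ℝ) < s.re →
      Λ s = ((Real.sqrt N : ℂ) / (2 * (Real.pi : ℂ))) ^ s * Complex.Gamma s *
        ∑' n : ℕ, a n * (n:ℂ) ^ (-s)) :
    ∀ s : ℂ, (k : ℝ) < s.re →
      Λ s = mellin ((Ioi 1).indicator g) s
        + Complex.I ^ k * mellin ((Ioi 1).indicator g) ((k:ℂ) - s) := by
  have hK0 : 0 ≤ K := by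
    have h1 := le_trans (norm_nonneg (g 1)) (hg_decay 1 le_rfl)
    nlinarith [Real.exp_pos (-c * 1)]
  set F := (Ioi 1).indicator g with hF_def
  intro s hs
  have hk1 : (1:ℝ) ≤ (k:ℝ) := by exact_mod_cast hk0
  have hσ0 : 0 < s.re := by linarith
  -- Step 1 : HasSum for mellin g s
  have hHS : HasSum (fun n : ℕ => Complex.Gamma s * a n / ((c * (n:ℕ) : ℝ) : ℂ) ^ s)
      (mellin g s) := by
    refine hasSum_mellin (p := fun n : ℕ => c * n) (fun n => ?_) hσ0
      (fun t ht => hg_sum t ht) ?_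
    · rcases Nat.eq_zero_or_pos n with rfl | hn
      · exact Or.inl ha0
      · right; positivity
    · -- summability
      have hk2 : (2:ℝ) ≤ (k:ℝ) := by
        have : 2 ≤ k := by obtain ⟨m, hm⟩ := hk; omega
        exact_mod_cast this
      have hhalf : ((k/2 : ℕ):ℝ) ≤ (k:ℝ)/2 := by
        rw [le_div_iff₀ (by norm_num : (0:ℝ) < 2)]
        exact_mod_cast Nat.div_mul_le_self k 2
      have hd : ((k/2 : ℕ):ℝ) - s.re < -1 := by linarith
      refine Summable.of_nonneg_of_le (fun n => by positivity) (fun n => ?_)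
        ((Real.summable_nat_rpow.mpr hd).mul_left (C / c ^ s.re))
      rcases Nat.eq_zero_or_pos n with rfl | hn
      · simp [ha0, Real.zero_rpow (show ((k/2 : ℕ):ℝ) - s.re ≠ 0 by linarith)]
      · have hn1 : (1:ℝ) ≤ (n:ℝ) := by exact_mod_cast hn
        have hnp : (0:ℝ) < (n:ℝ) := by linarith
        have hcn : (0:ℝ) < (c * (n:ℝ)) ^ s.re := Real.rpow_pos_of_pos (by positivity) _
        calc ‖a n‖ / (c * (n:ℝ)) ^ s.re ≤ (C * (n:ℝ)^(k/2)) / (c * (n:ℝ)) ^ s.re := by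
              gcongr
              exact hC n hn
          _ = (C / c ^ s.re) * (n:ℝ) ^ (((k/2 : ℕ):ℝ) - s.re) := by
              rw [Real.mul_rpow hc.le (Nat.cast_nonneg n), Real.rpow_sub hnp,
                ← Real.rpow_natCast (n:ℝ) (k/2)]
              have h1 : (0:ℝ) < c ^ s.re := Real.rpow_pos_of_pos hc _
              have h2 : (0:ℝ) < (n:ℝ) ^ s.re := Real.rpow_pos_of_pos hnp _
              field_simp
              try ring
  -- Step 2 : Λ s = mellin g s
  have hΛg : Λ s = mellin g s := by
    rw [hΛ_eq s hs, ← hHS.tsum_eq, ← tsum_mul_left]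
    refine tsum_congr fun n => ?_
    rcases Nat.eq_zero_or_pos n with rfl | hn
    · simp [ha0]
    · have hn0 : ((n:ℕ):ℂ) ≠ 0 := Nat.cast_ne_zero.mpr hn.ne'
      have hcC : ((c:ℝ):ℂ) ≠ 0 := Complex.ofReal_ne_zero.mpr hc.ne'
      have hsplitpow : ((c * (n:ℕ) : ℝ) : ℂ) ^ s = ((c:ℝ):ℂ) ^ s * ((n:ℕ):ℂ) ^ s := by
        rw [Complex.ofReal_mul, mul_cpow_ofReal_nonneg hc.le (Nat.cast_nonneg n)]
        try norm_num
      have hinv : ((Real.sqrt N : ℂ) / (2 * (Real.pi:ℂ))) ^ s = (((c:ℝ):ℂ))⁻¹ ^ s := by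
        congr 1
        rw [hc_def]
        push_cast
        rw [inv_div]
      have harg : Complex.arg ((c:ℝ):ℂ) ≠ Real.pi := by
        rw [Complex.arg_ofReal_of_nonneg hc.le]
        exact fun h => Real.pi_ne_zero h.symm
      have h1 : ((c:ℝ):ℂ) ^ s ≠ 0 := by
        rw [Ne, Complex.cpow_eq_zero_iff]
        tauto
      have h2 : ((n:ℕ):ℂ) ^ s ≠ 0 := by
        rw [Ne, Complex.cpow_eq_zero_iff]
        tauto
      rw [hinv, inv_cpow _ _ harg, hsplitpow, cpow_neg]
      field_simp
      try ring
  -- Step 3 : integrability facts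
  have hcpow_cont : ∀ w : ℂ, ContinuousOn (fun t : ℝ => (t:ℂ) ^ (w - 1)) (Ioi 1) := by
    intro w t ht
    refine (Complex.continuousAt_ofReal_cpow_const t (w-1) (Or.inr ?_)).continuousWithinAt
    exact ne_of_gt (lt_trans one_pos ht)
  have hgIoi1 : ∀ w : ℂ, IntegrableOn (fun t : ℝ => (t:ℂ) ^ (w - 1) * g t) (Ioi 1) := by
    intro w
    refine Integrable.mono' ((aux_real_int hc ((w-1).re)).const_mul K)
      (((hcpow_cont w).mul (hg_cont.mono fun t (ht : t ∈ Ioi 1) =>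
        mem_Ioi.mpr (lt_trans one_pos ht))).aestronglyMeasurable measurableSet_Ioi) ?_
    filter_upwards [ae_restrict_mem measurableSet_Ioi] with t ht
    have ht0 : (0:ℝ) < t := lt_trans one_pos ht
    rw [norm_mul, Complex.norm_cpow_eq_rpow_re_of_pos ht0]
    calc t ^ (w-1).re * ‖g t‖ ≤ t ^ (w-1).re * (K * Real.exp (-c * t)) := by
          refine mul_le_mul_of_nonneg_left (hg_decay t ht.le) (Real.rpow_nonneg ht0.le _)
      _ = K * (Real.exp (-c * t) * t ^ (w-1).re) := by ring
  have hFConv : ∀ w : ℂ, IntegrableOn (fun t : ℝ => (t:ℂ) ^ (w - 1) • F t) (Ioi 0) := by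
    intro w
    have hind : (fun t : ℝ => (t:ℂ) ^ (w - 1) • F t)
        = (Ioi 1).indicator (fun t : ℝ => (t:ℂ) ^ (w - 1) * g t) := by
      funext t
      by_cases h : t ∈ Ioi (1:ℝ)
      · simp [hF_def, indicator_of_mem h, smul_eq_mul]
      · simp [hF_def, indicator_of_notMem h]
    rw [hind, IntegrableOn, integrable_indicator_iff measurableSet_Ioi, IntegrableOn,
      Measure.restrict_restrict measurableSet_Ioi,
      show Ioi (1:ℝ) ∩ Ioi 0 = Ioi 1 from by rw [Ioi_inter_Ioi]; norm_num]
    exact hgIoi1 w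
  -- Step 4 : Mellin convergence of g at s
  have hgOtop : g =O[Filter.atTop] fun t => Real.exp (-c * t) := by
    rw [Asymptotics.isBigO_iff]
    refine ⟨K, ?_⟩
    filter_upwards [Filter.eventually_ge_atTop 1] with t ht
    rw [Real.norm_eq_abs, Real.abs_exp]
    exact hg_decay t ht
  have hgO0 : g =O[nhdsWithin 0 (Ioi 0)] (fun t : ℝ => t ^ (-(k:ℝ))) := by
    rw [Asymptotics.isBigO_iff]
    refine ⟨K, ?_⟩
    filter_upwards [Ioo_mem_nhdsGT_of_mem (show (0:ℝ) ∈ Ico (0:ℝ) 1 by norm_num)] with t ht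
    have ht0 : 0 < t := ht.1
    have hti : 1 ≤ t⁻¹ := by
      rw [le_inv_comm₀ one_pos ht0]
      simpa using ht.2.le
    have h3 := hg_inv t⁻¹ (inv_pos.mpr ht0)
    rw [inv_inv] at h3
    have hnorm : ‖g t‖ = (t⁻¹) ^ k * ‖g t⁻¹‖ := by
      rw [h3, norm_mul, norm_mul, norm_pow, Complex.norm_I, one_pow, one_mul, norm_pow,
        Complex.norm_real, Real.norm_eq_abs, abs_of_pos (inv_pos.mpr ht0)]
    have hb : ‖g t⁻¹‖ ≤ K := by
      refine le_trans (hg_decay t⁻¹ hti) ?_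
      have hle : -c * t⁻¹ ≤ 0 := by
        have : 0 ≤ c * t⁻¹ := by positivity
        linarith
      nlinarith [Real.exp_le_one_iff.mpr hle, Real.exp_pos (-c * t⁻¹)]
    have hrpow : ‖t ^ (-(k:ℝ))‖ = (t⁻¹) ^ k := by
      rw [Real.norm_eq_abs, abs_of_pos (Real.rpow_pos_of_pos ht0 _), Real.rpow_neg ht0.le,
        Real.rpow_natCast, inv_pow]
    rw [hnorm, hrpow]
    nlinarith [pow_pos (inv_pos.mpr ht0) k, pow_nonneg (inv_pos.mpr ht0).le k]
  have hMg : MellinConvergent g s :=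
    mellinConvergent_of_isBigO_rpow_exp hc (hg_cont.locallyIntegrableOn measurableSet_Ioi)
      hgOtop hgO0 hs
  -- Step 5 : split the mellin transform
  have hsub : IntegrableOn (fun t : ℝ => (t:ℂ) ^ (s - 1) • (g t - F t)) (Ioi 0) := by
    have h1 : IntegrableOn (fun t : ℝ => (t:ℂ) ^ (s - 1) • g t) (Ioi 0) := hMg
    have h2 := h1.sub (hFConv s)
    refine h2.congr (Filter.Eventually.of_forall fun t => ?_)
    simp only [Pi.sub_apply, smul_eq_mul]
    ring
  have hgsplit : mellin g s = mellin F s + mellin (fun t => g t - F t) s := by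
    rw [mellin, mellin, mellin, ← integral_add (hFConv s) hsub]
    refine setIntegral_congr_fun measurableSet_Ioi fun t ht => ?_
    rw [← smul_add, add_sub_cancel]
  have hinvstep : mellin (fun t => g t - F t) s = Complex.I ^ k * mellin F ((k:ℂ) - s) := by
    have h1 : mellin (fun t : ℝ => g t⁻¹ - F t⁻¹) (-s) = mellin (fun t => g t - F t) s := by
      have h0 := mellin_comp_inv (fun u : ℝ => g u - F u) (-s)
      rw [neg_neg] at h0
      exact h0
    rw [← h1, mellin, mellin, ← integral_const_mul]
    refine setIntegral_congr_ae measurableSet_Ioi ?_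
    have hone : ∀ᵐ t : ℝ, t ≠ (1:ℝ) := by
      rw [ae_iff]
      simp only [not_not, setOf_eq_eq_singleton]
      exact Real.volume_singleton
    filter_upwards [hone] with t ht1 ht
    have ht0 : (0:ℝ) < t := ht
    rcases lt_or_gt_of_ne ht1 with hlt | hgt
    · have hti : 1 < t⁻¹ := by
        rw [lt_inv_comm₀ one_pos ht0]
        simpa using hlt
      have hFt : F t = 0 := indicator_of_notMem (by simp only [mem_Ioi, not_lt]; exact hlt.le) _
      have hFti : F t⁻¹ = g t⁻¹ := indicator_of_mem (mem_Ioi.mpr hti) _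
      rw [hFt, hFti]
      simp
    · have hti : ¬ (1:ℝ) < t⁻¹ := by
        rw [not_lt, inv_le_comm₀ ht0 one_pos]
        simpa using hgt.le
      have hFt : F t = g t := indicator_of_mem (mem_Ioi.mpr hgt) _
      have hFti : F t⁻¹ = 0 := indicator_of_notMem (by simpa using hti) _
      rw [hFt, hFti, sub_zero, hg_inv t ht0]
      have hpow : ((t:ℂ)) ^ ((k:ℂ) - s - 1) = (t:ℂ) ^ (-s - 1) * (t:ℂ) ^ (k:ℕ) := by
        rw [← Complex.cpow_natCast (t:ℂ) k, ← Complex.cpow_add _ _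
          (Complex.ofReal_ne_zero.mpr ht0.ne')]
        congr 1
        push_cast
        ring
      rw [smul_eq_mul, smul_eq_mul, hpow]
      ring
  rw [hΛg, hgsplit, hinvstep]

private lemma lemma_ext (k : ℕ) (Λ : ℂ → ℂ) (M : ℂ → ℂ) (hΛ : Differentiable ℂ Λ) (hM : Differentiable ℂ M)
    (h : ∀ s : ℂ, (k:ℝ) < s.re → Λ s = M s + Complex.I ^ k * M ((k:ℂ) - s)) :
    ∀ s : ℂ, Λ s = M s + Complex.I ^ k * M ((k:ℂ) - s) := by
  have hG : Differentiable ℂ (fun z : ℂ => M z + Complex.I ^ k * M ((k:ℂ) - z)) :=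
    hM.add ((hM.comp ((differentiable_const ((k:ℂ))).sub differentiable_id)).const_mul _)
  have hopen : IsOpen {z : ℂ | (k:ℝ) < z.re} := isOpen_lt continuous_const Complex.continuous_re
  have hz0 : (((k:ℝ) + 1 : ℝ) : ℂ) ∈ {z : ℂ | (k:ℝ) < z.re} := by
    simp only [mem_setOf_eq, Complex.ofReal_re]
    linarith
  have heq := AnalyticOnNhd.eq_of_eventuallyEq (𝕜 := ℂ)
    (analyticOnNhd_univ_iff_differentiable.mpr hΛ)
    (analyticOnNhd_univ_iff_differentiable.mpr hG)
    (Filter.eventually_of_mem (hopen.mem_nhds hz0) fun s hs => h s hs)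
  exact fun s => congrFun heq s

/-- The completed `L`-function of a Fricke-invariant holomorphic cusp form of weight `k` for
`Γ₀(N)` equals, for every `s ∈ ℂ`,
`∑_{n>0} a(n) E_{1−s}(2πn/√N) + i^k ∑_{n>0} a(n) E_{s−k+1}(2πn/√N)`,
both series converging absolutely. -/
theorem completed_L_eq (N k : ℕ) (hN : 1 ≤ N) (hk : Even k) (hk0 : 0 < k)
    (f : ℂ → ℂ) (a : ℕ → ℂ) (ha0 : a 0 = 0)
    (hf_hol : DifferentiableOn ℂ f {z : ℂ | 0 < z.im})
    (hsum : ∀ z : ℂ, 0 < z.im →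
      HasSum (fun n : ℕ => a n * Complex.exp (2 * Real.pi * Complex.I * n * z)) (f z))
    (hbound : ∃ C : ℝ, ∀ n : ℕ, 1 ≤ n → ‖a n‖ ≤ C * (n : ℝ) ^ (k / 2))
    (hmod : ∀ A B c d : ℤ, A * d - (N:ℤ) * c * B = 1 → ∀ z : ℂ, 0 < z.im →
      f (((A:ℂ) * z + B) / ((N:ℂ) * c * z + d)) = ((N:ℂ) * c * z + d) ^ k * f z)
    (hFricke : ∀ z : ℂ, 0 < z.im → f (-1 / (N * z)) = (N:ℂ) ^ (k / 2) * z ^ k * f z)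
    (Λ : ℂ → ℂ) (hΛ_ent : Differentiable ℂ Λ)
    (hΛ_eq : ∀ s : ℂ, (k : ℝ) < s.re →
      Λ s = ((Real.sqrt N : ℂ) / (2 * (Real.pi : ℂ))) ^ s * Complex.Gamma s *
        ∑' n : ℕ, a n * (n:ℂ) ^ (-s)) :
    ∀ s : ℂ,
      Summable (fun n : ℕ => ‖a n * ∫ t in Ioi (1:ℝ),
        Complex.exp (-((2 * Real.pi * n / Real.sqrt N : ℝ) : ℂ) * t) *
          (t:ℂ) ^ (-(1 - s))‖) ∧
      Summable (fun n : ℕ => ‖a n * ∫ t in Ioi (1:ℝ),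
        Complex.exp (-((2 * Real.pi * n / Real.sqrt N : ℝ) : ℂ) * t) *
          (t:ℂ) ^ (-(s - k + 1))‖) ∧
      Λ s = (∑' n : ℕ, a n * ∫ t in Ioi (1:ℝ),
            Complex.exp (-((2 * Real.pi * n / Real.sqrt N : ℝ) : ℂ) * t) *
              (t:ℂ) ^ (-(1 - s)))
        + Complex.I ^ k * ∑' n : ℕ, a n * ∫ t in Ioi (1:ℝ),
            Complex.exp (-((2 * Real.pi * n / Real.sqrt N : ℝ) : ℂ) * t) *
              (t:ℂ) ^ (-(s - k + 1)) := by
  obtain ⟨C, hC⟩ := hbound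
  have hN0 : (0:ℝ) < (N:ℝ) := by exact_mod_cast hN
  have hrtN : 0 < Real.sqrt N := Real.sqrt_pos.mpr hN0
  have hπ : 0 < Real.pi := Real.pi_pos
  set c : ℝ := 2 * Real.pi / Real.sqrt N with hc_def
  have hc : 0 < c := by positivity
  set g : ℝ → ℂ := fun t => f (((t / Real.sqrt N : ℝ) : ℂ) * Complex.I) with hg_def
  -- pointwise expansion of g
  have hg_sum : ∀ t : ℝ, 0 < t →
      HasSum (fun n : ℕ => a n * ((Real.exp (-(c * n) * t) : ℝ) : ℂ)) (g t) := by
    intro t ht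
    have hz : (0:ℝ) < ((((t / Real.sqrt N : ℝ) : ℂ)) * Complex.I).im := by
      simp only [Complex.mul_I_im, Complex.ofReal_re]
      positivity
    have h := hsum _ hz
    have harg : ∀ n : ℕ, a n * Complex.exp (2 * Real.pi * Complex.I * n
        * (((t / Real.sqrt N : ℝ) : ℂ) * Complex.I))
        = a n * ((Real.exp (-(c * n) * t) : ℝ) : ℂ) := by
      intro n
      congr 1
      rw [Complex.ofReal_exp]
      congr 1
      have hne : ((Real.sqrt N : ℝ) : ℂ) ≠ 0 := Complex.ofReal_ne_zero.mpr hrtN.ne'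
      rw [hc_def]
      push_cast
      field_simp
      linear_combination ((n:ℂ) * t) * Complex.I_sq
    rw [hg_def]
    rwa [funext harg] at h
  -- summability of coefficients against exponentials
  have hsummable : ∀ x : ℝ, 0 < x → Summable (fun n : ℕ => ‖a n‖ * Real.exp (-(c * n) * x)) := by
    intro x hx
    have hk2 : k / 2 ≠ 0 := by obtain ⟨m, hm⟩ := hk; omega
    set r : ℝ := Real.exp (-(c * x)) with hr_def
    have hr1 : ‖r‖ < 1 := by
      rw [Real.norm_eq_abs, abs_of_pos (Real.exp_pos _), Real.exp_lt_one_iff]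
      nlinarith
    have hs := (summable_pow_mul_geometric_of_norm_lt_one (k/2) hr1).mul_left C
    refine Summable.of_nonneg_of_le (fun n => by positivity) (fun n => ?_) hs
    rcases Nat.eq_zero_or_pos n with rfl | hn
    · simp [ha0, hk2]
    · have h2 : Real.exp (-(c * n) * x) = r ^ n := by
        rw [hr_def, ← Real.exp_nat_mul]
        ring_nf
      rw [h2, ← mul_assoc]
      exact mul_le_mul_of_nonneg_right (hC n hn) (by positivity)
  have hg_cont : ContinuousOn g (Ioi 0) := by
    rw [hg_def]
    refine ContinuousOn.comp hf_hol.continuousOn (Continuous.continuousOn (by continuity)) ?_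
    intro t ht
    simp only [mem_setOf_eq, Complex.mul_I_im, Complex.ofReal_re]
    exact div_pos ht hrtN
  set K : ℝ := Real.exp c * ∑' n : ℕ, ‖a n‖ * Real.exp (-(c * n) * 1) with hK_def
  have hg_decay : ∀ t : ℝ, 1 ≤ t → ‖g t‖ ≤ K * Real.exp (-c * t) := by
    intro t ht
    have ht0 : (0:ℝ) < t := lt_of_lt_of_le one_pos ht
    have h := hg_sum t ht0
    have hs1 : Summable (fun n : ℕ => ‖a n‖ * Real.exp (-(c * n) * t)) := hsummable t ht0
    have hsnorm : Summable (fun n : ℕ => ‖a n * ((Real.exp (-(c * n) * t) : ℝ) : ℂ)‖) := by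
      refine hs1.congr fun n => ?_
      rw [norm_mul, Complex.norm_real, Real.norm_eq_abs, Real.abs_exp]
    calc ‖g t‖ = ‖∑' n : ℕ, a n * ((Real.exp (-(c * n) * t) : ℝ) : ℂ)‖ := by rw [h.tsum_eq]
      _ ≤ ∑' n : ℕ, ‖a n * ((Real.exp (-(c * n) * t) : ℝ) : ℂ)‖ := norm_tsum_le_tsum_norm hsnorm
      _ = ∑' n : ℕ, ‖a n‖ * Real.exp (-(c * n) * t) := by
          refine tsum_congr fun n => ?_
          rw [norm_mul, Complex.norm_real, Real.norm_eq_abs, Real.abs_exp]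
      _ ≤ ∑' n : ℕ, (‖a n‖ * Real.exp (-(c * n) * 1)) * (Real.exp c * Real.exp (-c * t)) := by
          refine Summable.tsum_le_tsum (fun n => ?_) hs1 ((hsummable 1 one_pos).mul_right _)
          rcases Nat.eq_zero_or_pos n with rfl | hn
          · simp [ha0]
          · rw [mul_assoc, ← Real.exp_add, ← Real.exp_add]
            refine mul_le_mul_of_nonneg_left ?_ (norm_nonneg _)
            rw [Real.exp_le_exp]
            have h1 : (1:ℝ) ≤ (n:ℝ) := by exact_mod_cast hn
            nlinarith [mul_nonneg (mul_nonneg hc.le (sub_nonneg.mpr h1)) (sub_nonneg.mpr ht)]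
      _ = (Real.exp c * ∑' n : ℕ, ‖a n‖ * Real.exp (-(c * n) * 1)) * Real.exp (-c * t) := by
          rw [tsum_mul_right]; ring
  -- the Fricke relation for g
  have hg_inv : ∀ t : ℝ, 0 < t → g t⁻¹ = Complex.I ^ k * (t:ℂ) ^ k * g t := by
    intro t ht
    simp only [hg_def]
    have hz : (0:ℝ) < ((((t / Real.sqrt N : ℝ) : ℂ)) * Complex.I).im := by
      simp only [Complex.mul_I_im, Complex.ofReal_re]; positivity
    have h := hFricke _ hz
    have hne : ((Real.sqrt N : ℝ) : ℂ) ≠ 0 := Complex.ofReal_ne_zero.mpr hrtN.ne'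
    have hNne : ((N:ℕ) : ℂ) ≠ 0 := by
      simp only [ne_eq, Nat.cast_eq_zero]
      exact_mod_cast hN0.ne'
    have ht0 : (t : ℂ) ≠ 0 := Complex.ofReal_ne_zero.mpr ht.ne'
    have hNrt : ((Real.sqrt N : ℝ) : ℂ) ^ 2 = (N : ℂ) := by
      rw [← Complex.ofReal_pow, Real.sq_sqrt hN0.le]
      simp
    have hX : ((N:ℂ) * ((((t / Real.sqrt N : ℝ) : ℂ)) * Complex.I)) ≠ 0 := by
      refine mul_ne_zero hNne (mul_ne_zero ?_ Complex.I_ne_zero)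
      push_cast
      exact div_ne_zero ht0 hne
    have harg : -1 / ((N:ℂ) * ((((t / Real.sqrt N : ℝ) : ℂ)) * Complex.I))
        = ((t⁻¹ / Real.sqrt N : ℝ) : ℂ) * Complex.I := by
      rw [div_eq_iff hX]
      push_cast
      field_simp
      linear_combination (-(N:ℂ))*Complex.I_sq + (-1:ℂ)*hNrt
    rw [harg] at h
    rw [h]
    have hNk : ((Real.sqrt N : ℝ) : ℂ) ^ k = (N:ℂ) ^ (k / 2) := by
      have h2 : 2 * (k / 2) = k := by obtain ⟨m, hm⟩ := hk; omega
      calc ((Real.sqrt N : ℝ) : ℂ) ^ k = (((Real.sqrt N : ℝ) : ℂ) ^ 2) ^ (k / 2) := by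
            rw [← pow_mul, h2]
        _ = (N:ℂ) ^ (k / 2) := by rw [hNrt]
    have hcoef : (N:ℂ) ^ (k / 2) * ((((t / Real.sqrt N : ℝ) : ℂ)) * Complex.I) ^ k
        = Complex.I ^ k * (t:ℂ) ^ k := by
      rw [← hNk]
      push_cast
      rw [mul_pow, div_pow]
      field_simp
    rw [hcoef]
  -- main ingredients
  have hMdiff : Differentiable ℂ (mellin ((Ioi 1).indicator g)) :=
    lemma_mdiff g c K hc hg_cont hg_decay
  have key := lemma_key a ha0 N hrtN c hc hc_def g hg_cont hg_sum hsummable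
  have hsplit := lemma_split N k hk hk0 a ha0 C hC hN0 hrtN c K hc hc_def g hg_cont hg_sum
    hg_decay hg_inv Λ hΛ_eq
  have hext := lemma_ext k Λ (mellin ((Ioi 1).indicator g)) hΛ_ent hMdiff hsplit
  intro s
  refine ⟨by simpa only [neg_sub] using (key s).1, ?_, ?_⟩
  · have h2 := (key ((k:ℂ) - s)).1
    simp only [show -(s - (k:ℂ) + 1) = ((k:ℂ) - s) - 1 from by ring]
    exact h2
  · rw [hext s, (key s).2, (key ((k:ℂ) - s)).2]
    simp only [neg_sub, show -(s - (k:ℂ) + 1) = ((k:ℂ) - s) - 1 by ring]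
end
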